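/- arXiv:1103.4973 — 3 statements merged into one kernel-verified Lean document; each statement's English description precedes it below -/
import Mathlib

section
/- Suppose the birth–death chain started at k hits 0 with probability 1. Then for any stopping time T and any n ≥ 1, E[G_T^n] ≤ x_k/(t_{n−1} l_n), where G_T^n is the number of times m with 0 ≤ m ≤ T−1 and X_m = n. -/
open MeasureTheory Filter Topology Finset
open scoped ENNReal NNReal Classical

/-- Partial products `t_n = (l_1 ⋯ l_n)/(r_1 ⋯ r_n)`, with `t_0 = 1`. -/
noncomputable def tp (l r : ℕ → ℝ) (n : ℕ) : ℝ :=
  (∏ i ∈ Finset.Icc 1 n, l i) / (∏ i ∈ Finset.Icc 1 n, r i)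

/-- `x_n = Σ_{i=0}^{n-1} t_i`. -/
noncomputable def xp (l r : ℕ → ℝ) (n : ℕ) : ℝ :=
  ∑ i ∈ Finset.range n, tp l r i

/-- The natural filtration of the process `X` (σ-algebra generated by `X_0, …, X_m`). -/
def natFilt {Ω : Type*} (X : ℕ → Ω → ℕ) (m : ℕ) : MeasurableSpace Ω :=
  ⨆ i ∈ Finset.range (m + 1), MeasurableSpace.comap (X i) ⊤

/-- A birth–death chain on ℕ started at `k`, with up–probabilities `r n` and
down–probabilities `l n` for states `n ≥ 1`, and `0` absorbing.  The Markov
property is encoded by conditioning on arbitrary events of the natural filtration. -/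
structure IsBDChain {Ω : Type*} [MeasurableSpace Ω] (P : Measure Ω)
    (X : ℕ → Ω → ℕ) (k : ℕ) (l r : ℕ → ℝ) : Prop where
  isProb : IsProbabilityMeasure P
  one_le_k : 1 ≤ k
  l_pos : ∀ n, 1 ≤ n → 0 < l n
  r_pos : ∀ n, 1 ≤ n → 0 < r n
  lr_one : ∀ n, 1 ≤ n → l n + r n = 1
  meas : ∀ m, Measurable (X m)
  init : ∀ᵐ ω ∂P, X 0 ω = k
  absorb : ∀ᵐ ω ∂P, ∀ m, X m ω = 0 → X (m + 1) ω = 0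
  step_up : ∀ m n, 1 ≤ n → ∀ A : Set Ω, MeasurableSet[natFilt X m] A →
    P (A ∩ {ω | X m ω = n ∧ X (m + 1) ω = n + 1}) =
      ENNReal.ofReal (r n) * P (A ∩ {ω | X m ω = n})
  step_down : ∀ m n, 1 ≤ n → ∀ A : Set Ω, MeasurableSet[natFilt X m] A →
    P (A ∩ {ω | X m ω = n ∧ X (m + 1) ω = n - 1}) =
      ENNReal.ofReal (l n) * P (A ∩ {ω | X m ω = n})

/-- A (finite-valued) stopping time for the natural filtration of `X`. -/
def IsBDStop {Ω : Type*} (X : ℕ → Ω → ℕ) (T : Ω → ℕ) : Prop :=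
  ∀ m, MeasurableSet[natFilt X m] {ω | T ω = m}

/-- An extended-ℕ-valued stopping time for the natural filtration of `X`. -/
def IsBDStopE {Ω : Type*} (X : ℕ → Ω → ℕ) (T : Ω → ℕ∞) : Prop :=
  ∀ m : ℕ, MeasurableSet[natFilt X m] {ω | T ω = (m : ℕ∞)}

/-- First hitting time of the set `S ⊆ ℕ` by the path `m ↦ X m ω`, valued in `ℕ∞`. -/
noncomputable def hitTime {Ω : Type*} (X : ℕ → Ω → ℕ) (S : Set ℕ) (ω : Ω) : ℕ∞ :=
  sInf ((fun m : ℕ => (m : ℕ∞)) '' {m | X m ω ∈ S})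

/-- `T_∂`: the first hitting time of `0`, with value `∞` if `0` is never hit. -/
noncomputable def hit0 {Ω : Type*} (X : ℕ → Ω → ℕ) (ω : Ω) : ℕ∞ :=
  hitTime X {0} ω

/-- `G_T^n`: the number of times `m` with `0 ≤ m ≤ T-1` and `X_m = n` (finite `T`). -/
def count {Ω : Type*} (X : ℕ → Ω → ℕ) (n : ℕ) (T : Ω → ℕ) (ω : Ω) : ℕ :=
  ((Finset.range (T ω)).filter fun m => X m ω = n).card

/-- `G_τ^n` for an `ℕ∞`-valued time `τ`, valued in `ℝ≥0∞`. -/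
noncomputable def countE {Ω : Type*} (X : ℕ → Ω → ℕ) (n : ℕ) (τ : Ω → ℕ∞) (ω : Ω) : ℝ≥0∞ :=
  ∑' m : ℕ, if (m : ℕ∞) < τ ω ∧ X m ω = n then 1 else 0


section realaux
variable {l r : ℕ → ℝ} (hl : ∀ j, 1 ≤ j → 0 < l j) (hr : ∀ j, 1 ≤ j → 0 < r j)
  (hlr : ∀ j, 1 ≤ j → l j + r j = 1)

include hl hr in
lemma tp_pos (i : ℕ) : 0 < tp l r i := by
  apply div_pos <;> apply Finset.prod_pos <;> intro j hj <;>
    [exact hl j (Finset.mem_Icc.mp hj).1; exact hr j (Finset.mem_Icc.mp hj).1]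

include hr in
lemma tp_rec (j : ℕ) : r (j+1) * tp l r (j+1) = l (j+1) * tp l r j := by
  have h1 : (0:ℝ) < r (j+1) := hr _ (by omega)
  have h2 : (0:ℝ) < ∏ i ∈ Finset.Icc 1 j, r i :=
    Finset.prod_pos fun i hi => hr i (Finset.mem_Icc.mp hi).1
  rw [tp, tp, Finset.prod_Icc_succ_top (by omega), Finset.prod_Icc_succ_top (by omega)]
  field_simp

lemma xp_succ (i : ℕ) : xp l r (i+1) = xp l r i + tp l r i := Finset.sum_range_succ _ _

include hl hr in
lemma xp_mono {i j : ℕ} (h : i ≤ j) : xp l r i ≤ xp l r j :=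
  Finset.sum_le_sum_of_subset_of_nonneg (Finset.range_subset_range.mpr h)
    (fun m _ _ => (tp_pos hl hr m).le)

include hl hr hlr in
lemma harm (n : ℕ) (hn : 1 ≤ n) (i : ℕ) (hi : 1 ≤ i) :
    r i * xp l r (min (i+1) n) + l i * xp l r (min (i-1) n)
      + (if i = n then tp l r (n-1) * l n else 0) = xp l r (min i n) := by
  obtain ⟨j, rfl⟩ : ∃ j, i = j + 1 := ⟨i - 1, by omega⟩
  rcases lt_trichotomy (j+1) n with h | h | h
  · rw [if_neg (by omega)]
    rw [min_eq_left (by omega), min_eq_left (by omega), min_eq_left (by omega)]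
    simp only [Nat.add_sub_cancel]
    rw [show j + 1 + 1 = (j+1)+1 from rfl, xp_succ, xp_succ]
    have h1 := hlr (j+1) (by omega)
    have h2 := tp_rec (l := l) hr j
    linear_combination (xp l r j + tp l r j) * h1 + h2
  · subst h
    rw [if_pos rfl, min_eq_right (by omega), min_eq_left (by omega), min_self]
    simp only [Nat.add_sub_cancel]
    rw [xp_succ]
    have h1 := hlr (j+1) (by omega)
    linear_combination (xp l r j + tp l r j) * h1
  · rw [if_neg (by omega)]
    rw [min_eq_right (by omega), min_eq_right (by omega), min_eq_right (by omega)]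
    linear_combination xp l r n * hlr (j+1) (by omega)

end realaux

/-- If the chain hits `0` with probability `1`, then for any
stopping time `T` and any `n ≥ 1`, `E[G_T^n] ≤ x_k/(t_{n-1} l_n)`. -/
theorem stmt11 {Ω : Type*} [MeasurableSpace Ω] (P : Measure Ω) (X : ℕ → Ω → ℕ)
    (k : ℕ) (l r : ℕ → ℝ) (hC : IsBDChain P X k l r)
    (hone : P {ω | ∃ m : ℕ, X m ω = 0} = 1)
    (T : Ω → ℕ∞) (hstop : IsBDStopE X T) (n : ℕ) (hn : 1 ≤ n) :
    ∫⁻ ω, countE X n T ω ∂P ≤ ENNReal.ofReal (xp l r k / (tp l r (n - 1) * l n)) := by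
  obtain ⟨hP, hk, hl, hr, hlr, hmeas, hinit, habs, hup, hdown⟩ := hC
  haveI := hP
  set S : ℕ → ℕ → Set Ω := fun m i => {ω | X m ω = i} with hS
  have hSmeas : ∀ m i, MeasurableSet (S m i) := fun m i => hmeas m (MeasurableSet.singleton i)
  set f : ℕ → ℝ := fun j => xp l r (min j n) with hf
  set ef : ℕ → ℝ≥0∞ := fun j => ENNReal.ofReal (f j) with hef
  set c : ℝ≥0∞ := ENNReal.ofReal (tp l r (n-1) * l n) with hcdef
  have hf_nonneg : ∀ j, 0 ≤ f j := fun j => by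
    rw [hf]
    simpa [xp] using xp_mono hl hr (Nat.zero_le (min j n))
  have hcpos : 0 < tp l r (n-1) * l n := mul_pos (tp_pos hl hr _) (hl n hn)
  have hc0 : c ≠ 0 := (ENNReal.ofReal_pos.mpr hcpos).ne'
  have hcne : c ≠ ⊤ := ENNReal.ofReal_ne_top
  -- partition of the lintegral over values of X m
  have hpart : ∀ (m : ℕ) (g : Ω → ℝ≥0∞),
      ∫⁻ ω, g ω ∂P = ∑' i : ℕ, ∫⁻ ω in S m i, g ω ∂P := by
    intro m g
    have hU : (⋃ i, S m i) = Set.univ := by ext ω; simp [hS]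
    have hd : Pairwise (Function.onFun Disjoint (S m)) := by
      intro i j hij
      simp only [Function.onFun, hS, Set.disjoint_left, Set.mem_setOf_eq]
      intro ω h1 h2
      exact hij (h1.symm.trans h2)
    rw [← setLIntegral_univ, ← hU, lintegral_iUnion (hSmeas m) hd]
  have hval : ∀ (m i : ℕ), ∫⁻ ω in S m i, ef (X m ω) ∂P = ef i * P (S m i) := by
    intro m i
    rw [setLIntegral_congr_fun_ae (hSmeas m i)
      (ae_of_all _ fun ω hω => by rw [show X m ω = i from hω]), setLIntegral_const]
  -- the one-step identity
  have key : ∀ m, (∫⁻ ω, ef (X (m+1) ω) ∂P) + c * P (S m n) = ∫⁻ ω, ef (X m ω) ∂P := by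
    intro m
    rw [hpart m (fun ω => ef (X (m+1) ω)), hpart m (fun ω => ef (X m ω))]
    have main : ∀ i, (∫⁻ ω in S m i, ef (X (m+1) ω) ∂P) + (if i = n then c else 0) * P (S m i)
        = ef i * P (S m i) := by
      intro i
      rcases Nat.eq_zero_or_pos i with rfl | hi1
      · rw [if_neg (by omega), zero_mul, add_zero]
        have h0 : ∀ᵐ ω ∂P, ω ∈ S m 0 → ef (X (m+1) ω) = ef 0 := by
          filter_upwards [habs] with ω hω h
          rw [hω m h]
        rw [setLIntegral_congr_fun_ae (hSmeas m 0) h0, setLIntegral_const]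
      · set U : Set Ω := S m i ∩ S (m+1) (i+1) with hUdef
        set D : Set Ω := S m i ∩ S (m+1) (i-1) with hDdef
        have hUm : MeasurableSet U := (hSmeas m i).inter (hSmeas (m+1) (i+1))
        have hDm : MeasurableSet D := (hSmeas m i).inter (hSmeas (m+1) (i-1))
        have hU : P U = ENNReal.ofReal (r i) * P (S m i) := by
          have h := hup m i hi1 Set.univ MeasurableSet.univ
          simpa [hUdef, hS, Set.univ_inter, Set.setOf_and] using h
        have hD : P D = ENNReal.ofReal (l i) * P (S m i) := by
          have h := hdown m i hi1 Set.univ MeasurableSet.univ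
          simpa [hDdef, hS, Set.univ_inter, Set.setOf_and] using h
        have hdisj : Disjoint U D := by
          simp only [hUdef, hDdef, hS, Set.disjoint_left, Set.mem_inter_iff, Set.mem_setOf_eq]
          rintro ω ⟨-, h1⟩ ⟨-, h2⟩
          omega
        have hsub : U ∪ D ⊆ S m i :=
          Set.union_subset (Set.inter_subset_left) (Set.inter_subset_left)
        have hPUD : P (U ∪ D) = P (S m i) := by
          rw [measure_union hdisj hDm, hU, hD, ← add_mul,
            ← ENNReal.ofReal_add (hr i hi1).le (hl i hi1).le, add_comm (r i) (l i),
            hlr i hi1, ENNReal.ofReal_one, one_mul]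
        have hae : (S m i : Set Ω) =ᵐ[P] ((U ∪ D : Set Ω)) := by
          rw [MeasureTheory.ae_eq_set]
          constructor
          · rw [measure_diff hsub (hUm.union hDm).nullMeasurableSet (measure_ne_top _ _),
              hPUD, tsub_self]
          · rw [Set.diff_eq_empty.mpr hsub, measure_empty]
        have hIU : ∫⁻ ω in U, ef (X (m+1) ω) ∂P = ef (i+1) * P U := by
          rw [setLIntegral_congr_fun_ae hUm
            (ae_of_all _ fun ω hω => by rw [show X (m+1) ω = i+1 from hω.2]), setLIntegral_const]
        have hID : ∫⁻ ω in D, ef (X (m+1) ω) ∂P = ef (i-1) * P D := by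
          rw [setLIntegral_congr_fun_ae hDm
            (ae_of_all _ fun ω hω => by rw [show X (m+1) ω = i-1 from hω.2]), setLIntegral_const]
        have hsc : ENNReal.ofReal (r i) * ef (i+1) + ENNReal.ofReal (l i) * ef (i-1)
            + (if i = n then c else 0) = ef i := by
          have hite : (if i = n then c else 0)
              = ENNReal.ofReal (if i = n then tp l r (n-1) * l n else 0) := by
            split_ifs <;> simp [hcdef]
          simp only [hef, hf, hite]
          rw [← ENNReal.ofReal_mul (hr i hi1).le, ← ENNReal.ofReal_mul (hl i hi1).le,
            ← ENNReal.ofReal_add (mul_nonneg (hr i hi1).le (hf_nonneg (i+1)))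
              (mul_nonneg (hl i hi1).le (hf_nonneg (i-1))),
            ← ENNReal.ofReal_add
              (add_nonneg (mul_nonneg (hr i hi1).le (hf_nonneg (i+1)))
                (mul_nonneg (hl i hi1).le (hf_nonneg (i-1))))
              (by split_ifs; exacts [hcpos.le, le_rfl]),
            harm hl hr hlr n hn i hi1]
        calc (∫⁻ ω in S m i, ef (X (m+1) ω) ∂P) + (if i = n then c else 0) * P (S m i)
            = (∫⁻ ω in U ∪ D, ef (X (m+1) ω) ∂P) + (if i = n then c else 0) * P (S m i) := by
              rw [setLIntegral_congr hae]
          _ = ef (i+1) * (ENNReal.ofReal (r i) * P (S m i))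
              + ef (i-1) * (ENNReal.ofReal (l i) * P (S m i))
              + (if i = n then c else 0) * P (S m i) := by
              rw [lintegral_union hDm hdisj, hIU, hID, hU, hD]
          _ = (ENNReal.ofReal (r i) * ef (i+1) + ENNReal.ofReal (l i) * ef (i-1)
              + (if i = n then c else 0)) * P (S m i) := by ring
          _ = ef i * P (S m i) := by rw [hsc]
    calc (∑' i : ℕ, ∫⁻ ω in S m i, ef (X (m+1) ω) ∂P) + c * P (S m n)
        = ∑' i : ℕ, ((∫⁻ ω in S m i, ef (X (m+1) ω) ∂P) + (if i = n then c else 0) * P (S m i)) := by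
          rw [ENNReal.tsum_add]
          congr 1
          rw [tsum_eq_single n (fun b hb => by rw [if_neg hb, zero_mul]), if_pos rfl]
      _ = ∑' i : ℕ, ∫⁻ ω in S m i, ef (X m ω) ∂P :=
          tsum_congr fun i => (main i).trans (hval m i).symm
  -- telescoping
  have tel : ∀ M, (∫⁻ ω, ef (X M ω) ∂P) + ∑ m ∈ Finset.range M, c * P (S m n)
      = ∫⁻ ω, ef (X 0 ω) ∂P := by
    intro M
    induction M with
    | zero => simp
    | succ M ih =>
        rw [Finset.sum_range_succ, ← ih, ← key M]
        ring
  have hF0 : ∫⁻ ω, ef (X 0 ω) ∂P ≤ ENNReal.ofReal (xp l r k) := by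
    have h1 : ∫⁻ ω, ef (X 0 ω) ∂P = ef k := by
      rw [lintegral_congr_ae (hinit.mono fun ω h => by rw [h]), lintegral_const,
        measure_univ, mul_one]
    rw [h1, hef, hf]
    exact ENNReal.ofReal_le_ofReal (xp_mono hl hr (min_le_left _ _))
  have hsum : ∑' m : ℕ, c * P (S m n) ≤ ENNReal.ofReal (xp l r k) := by
    rw [ENNReal.tsum_eq_iSup_nat]
    exact iSup_le fun M => le_trans le_add_self ((tel M).le.trans hF0)
  have hsum' : ∑' m : ℕ, P (S m n) ≤ ENNReal.ofReal (xp l r k) / c := by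
    rw [ENNReal.le_div_iff_mul_le (Or.inl hc0) (Or.inl hcne), ← ENNReal.tsum_mul_right]
    simpa [mul_comm] using hsum
  have h1 : ∫⁻ ω, countE X n T ω ∂P ≤ ∑' m : ℕ, P (S m n) := by
    have hle : ∀ ω, countE X n T ω
        ≤ ∑' m : ℕ, Set.indicator (S m n) (fun _ => (1:ℝ≥0∞)) ω := by
      intro ω
      refine ENNReal.tsum_le_tsum fun m => ?_
      by_cases hx : X m ω = n
      · simp only [Set.indicator_apply, hS, Set.mem_setOf_eq, hx, if_true]
        split_ifs <;> simp
      · simp [hx]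
    calc ∫⁻ ω, countE X n T ω ∂P
        ≤ ∫⁻ ω, ∑' m : ℕ, Set.indicator (S m n) (fun _ => (1:ℝ≥0∞)) ω ∂P := lintegral_mono hle
      _ = ∑' m : ℕ, ∫⁻ ω, Set.indicator (S m n) (fun _ => (1:ℝ≥0∞)) ω ∂P :=
          lintegral_tsum fun m => (measurable_const.indicator (hSmeas m n)).aemeasurable
      _ = ∑' m : ℕ, P (S m n) := tsum_congr fun m => by
          exact lintegral_indicator_one (hSmeas m n)
  calc ∫⁻ ω, countE X n T ω ∂P ≤ ∑' m : ℕ, P (S m n) := h1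
    _ ≤ ENNReal.ofReal (xp l r k) / c := hsum'
    _ = ENNReal.ofReal (xp l r k / (tp l r (n-1) * l n)) := by
        rw [ENNReal.ofReal_div_of_pos hcpos, hcdef]
end

section
/- Suppose the birth–death chain started at k hits 0 with probability 1 and that Σ_{n=1}^{∞} |1/t_n − 1/t_{n−1}| < ∞. Then for every stopping time T with E[T] < ∞, E[X_T] ≤ k + x_k Σ_{n=1}^{∞} |1/t_n − 1/t_{n−1}|; in particular sup over all such stopping times of E[X_T] is finite. -/
open MeasureTheory Filter Topology Finset
open scoped ENNReal NNReal Classical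

set_option linter.unusedSectionVars false

namespace BD
variable {l r : ℕ → ℝ}

lemma tp_pos (hl : ∀ n, 1 ≤ n → 0 < l n) (hr : ∀ n, 1 ≤ n → 0 < r n) (n : ℕ) :
    0 < tp l r n := by
  unfold tp
  apply div_pos <;> exact Finset.prod_pos fun i hi => by
    first
      | exact hl i (Finset.mem_Icc.mp hi).1
      | exact hr i (Finset.mem_Icc.mp hi).1

lemma tp_succ (n : ℕ) : tp l r (n + 1) = tp l r n * (l (n + 1) / r (n + 1)) := by
  unfold tp
  rw [Finset.prod_Icc_succ_top (by omega), Finset.prod_Icc_succ_top (by omega)]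
  ring

lemma tp_key (hl : ∀ n, 1 ≤ n → 0 < l n) (hr : ∀ n, 1 ≤ n → 0 < r n) (n : ℕ) :
    1 / tp l r (n + 1) - 1 / tp l r n = (r (n + 1) - l (n + 1)) / (l (n + 1) * tp l r n) := by
  have h1 := tp_pos hl hr n
  have h2 : 0 < l (n + 1) := hl _ (by omega)
  have h3 : 0 < r (n + 1) := hr _ (by omega)
  rw [tp_succ]
  field_simp

lemma xp_nonneg (hl : ∀ n, 1 ≤ n → 0 < l n) (hr : ∀ n, 1 ≤ n → 0 < r n) (n : ℕ) :
    0 ≤ xp l r n :=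
  Finset.sum_nonneg fun i _ => (tp_pos hl hr i).le

lemma xp_mono (hl : ∀ n, 1 ≤ n → 0 < l n) (hr : ∀ n, 1 ≤ n → 0 < r n) {a b : ℕ} (h : a ≤ b) :
    xp l r a ≤ xp l r b := by
  unfold xp
  exact Finset.sum_le_sum_of_subset_of_nonneg (Finset.range_subset_range.mpr h)
    (fun i _ _ => (tp_pos hl hr i).le)

lemma xp_succ (n : ℕ) : xp l r (n + 1) = xp l r n + tp l r n := by
  unfold xp; rw [Finset.sum_range_succ]

end BD

set_option linter.unusedSectionVars false
namespace BD
variable {Ω : Type*} [MeasurableSpace Ω] {X : ℕ → Ω → ℕ}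

lemma natFilt_le (hX : ∀ m, Measurable (X m)) (m : ℕ) : natFilt X m ≤ ‹MeasurableSpace Ω› := by
  refine iSup₂_le fun i _ => ?_
  rintro s ⟨t, -, rfl⟩
  exact hX i (by trivial : MeasurableSet t)

lemma natFilt_mono {j m : ℕ} (h : j ≤ m) : natFilt X j ≤ natFilt X m := by
  refine iSup₂_le fun i hi => ?_
  exact le_iSup₂ (f := fun i (_ : i ∈ Finset.range (m+1)) => MeasurableSpace.comap (X i) ⊤)
    i (Finset.mem_range.mpr (by simp at hi; omega))

lemma meas_Xeq (m n : ℕ) : MeasurableSet[natFilt X m] {ω | X m ω = n} := by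
  have h1 : MeasurableSpace.comap (X m) ⊤ ≤ natFilt X m :=
    le_iSup₂ (f := fun i (_ : i ∈ Finset.range (m+1)) => MeasurableSpace.comap (X i) ⊤)
      m (Finset.mem_range.mpr (by omega))
  exact h1 _ ⟨{n}, trivial, rfl⟩

lemma meas_Tgt {T : Ω → ℕ} (hT : IsBDStop X T) (m : ℕ) :
    MeasurableSet[natFilt X m] {ω | m < T ω} := by
  have : {ω | m < T ω} = (⋃ j ∈ Finset.range (m + 1), {ω | T ω = j})ᶜ := by
    ext ω
    simp only [Set.mem_setOf_eq, Set.mem_compl_iff, Set.mem_iUnion, Finset.mem_range, not_exists]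
    constructor
    · intro h j hj hTj; omega
    · intro h; by_contra hc; exact h (T ω) (by omega) rfl
  rw [this]
  exact (Finset.measurableSet_biUnion _ fun j hj =>
    natFilt_mono (by simp at hj; omega) _ (hT j)).compl

lemma meas_T {T : Ω → ℕ} (hX : ∀ m, Measurable (X m)) (hT : IsBDStop X T) : Measurable T := by
  apply measurable_to_countable
  intro y
  exact natFilt_le hX (T y) _ (hT (T y))

end BD

namespace BD
variable {Ω : Type*} [MeasurableSpace Ω] {P : Measure Ω} {X : ℕ → Ω → ℕ} {k : ℕ} {l r : ℕ → ℝ}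

lemma measX (hC : IsBDChain P X k l r) (m n : ℕ) : MeasurableSet {ω | X m ω = n} :=
  hC.meas m (by trivial : MeasurableSet {n})

lemma step_total (hC : IsBDChain P X k l r) (m n : ℕ) (hn : 1 ≤ n) :
    P {ω | X m ω = n ∧ ¬(X (m + 1) ω = n + 1 ∨ X (m + 1) ω = n - 1)} = 0 := by
  haveI := hC.isProb
  set E := {ω | X m ω = n} with hE
  set U := {ω | X m ω = n ∧ X (m + 1) ω = n + 1} with hU
  set D := {ω | X m ω = n ∧ X (m + 1) ω = n - 1} with hD
  have hUm : MeasurableSet U := (measX hC m n).inter (measX hC (m+1) (n+1))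
  have hDm : MeasurableSet D := (measX hC m n).inter (measX hC (m+1) (n-1))
  have hPU : P U = ENNReal.ofReal (r n) * P E := by
    have := hC.step_up m n hn Set.univ MeasurableSet.univ
    simpa using this
  have hPD : P D = ENNReal.ofReal (l n) * P E := by
    have := hC.step_down m n hn Set.univ MeasurableSet.univ
    simpa using this
  have hdisj : Disjoint U D := by
    rw [Set.disjoint_left]
    rintro ω ⟨h1, h2⟩ ⟨h3, h4⟩
    omega
  have hPUD : P (U ∪ D) = P E := by
    rw [measure_union hdisj hDm, hPU, hPD, ← add_mul, ← ENNReal.ofReal_add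
      (hC.r_pos n hn).le (hC.l_pos n hn).le]
    rw [show r n + l n = 1 by linarith [hC.lr_one n hn]]
    simp
  have hsplit : E = (U ∪ D) ∪ (E \ (U ∪ D)) := by
    rw [Set.union_diff_cancel]
    intro ω hω
    rcases hω with h | h
    · exact h.1
    · exact h.1
  have hBm : MeasurableSet (E \ (U ∪ D)) := ((measX hC m n).diff (hUm.union hDm))
  have key : P E = P E + P (E \ (U ∪ D)) := by
    conv_lhs => rw [hsplit]
    rw [measure_union _ hBm, hPUD]
    exact Set.disjoint_sdiff_right
  have hfin : P E ≠ ⊤ := measure_ne_top P E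
  have h0 : P (E \ (U ∪ D)) = 0 := by
    have := (ENNReal.add_right_inj hfin).mp (by rw [← key, add_zero] : P E + 0 = P E + P (E \ (U ∪ D)))
    exact this.symm
  have hsub : {ω | X m ω = n ∧ ¬(X (m + 1) ω = n + 1 ∨ X (m + 1) ω = n - 1)} ⊆ E \ (U ∪ D) := by
    intro ω hω
    simp only [Set.mem_setOf_eq] at hω
    simp only [hE, hU, hD, Set.mem_diff, Set.mem_setOf_eq, Set.mem_union]
    tauto
  exact measure_mono_null hsub h0

lemma ae_step (hC : IsBDChain P X k l r) :
    ∀ᵐ ω ∂P, ∀ m, 1 ≤ X m ω →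
      X (m + 1) ω = X m ω + 1 ∨ X (m + 1) ω = X m ω - 1 := by
  rw [ae_all_iff]
  intro m
  have : {ω | ¬(1 ≤ X m ω → X (m + 1) ω = X m ω + 1 ∨ X (m + 1) ω = X m ω - 1)} ⊆
      ⋃ n : ℕ, {ω | X m ω = n + 1 ∧ ¬(X (m + 1) ω = (n + 1) + 1 ∨ X (m + 1) ω = (n + 1) - 1)} := by
    intro ω hω
    simp only [Set.mem_setOf_eq, Classical.not_imp] at hω
    obtain ⟨h1, h2⟩ := hω
    refine Set.mem_iUnion.mpr ⟨X m ω - 1, ?_⟩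
    simp only [Set.mem_setOf_eq]
    constructor
    · omega
    · rw [show X m ω - 1 + 1 = X m ω by omega]; exact h2
  rw [ae_iff]
  exact measure_mono_null this (measure_iUnion_null fun n =>
    step_total hC m (n + 1) (by omega))

lemma ae_le (hC : IsBDChain P X k l r) : ∀ᵐ ω ∂P, ∀ m, X m ω ≤ k + m := by
  filter_upwards [hC.init, hC.absorb, ae_step hC] with ω h0 habs hstep
  intro m
  induction m with
  | zero => omega
  | succ m ih =>
    by_cases h : X m ω = 0
    · have := habs m h; omega
    · have := hstep m (by omega); omega

lemma meas_gt_eq_zero (hC : IsBDChain P X k l r) (m j : ℕ) (hj : k + m < j) :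
    P {ω | X m ω = j} = 0 := by
  have h := ae_le hC
  rw [ae_iff] at h
  refine measure_mono_null (fun ω hω => ?_) h
  simp only [Set.mem_setOf_eq] at hω ⊢
  exact fun hall => absurd (hall m) (by omega)

end BD

namespace BD
variable {Ω : Type*} [MeasurableSpace Ω] {P : Measure Ω} {X : ℕ → Ω → ℕ} {k : ℕ} {l r : ℕ → ℝ}

lemma integral_finsum_indicator [IsFiniteMeasure P] (s : Finset ℕ) (E : ℕ → Set Ω)
    (hE : ∀ j ∈ s, MeasurableSet (E j)) (c : ℕ → ℝ) :
    ∫ ω, (∑ j ∈ s, Set.indicator (E j) (fun _ => c j) ω) ∂P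
      = ∑ j ∈ s, c j * (P (E j)).toReal := by
  rw [integral_finset_sum s (fun j hj => (integrable_const (c j)).indicator (hE j hj))]
  refine Finset.sum_congr rfl fun j hj => ?_
  rw [integral_indicator_const (c j) (hE j hj), smul_eq_mul, mul_comm]
  rfl

lemma ofReal_mul_toReal (a : ℝ) (ha : 0 ≤ a) (q : ℝ≥0∞) (hq : q ≠ ⊤) :
    (ENNReal.ofReal a * q).toReal = a * q.toReal := by
  rw [ENNReal.toReal_mul, ENNReal.toReal_ofReal ha]

end BD

namespace BD
variable {Ω : Type*} [MeasurableSpace Ω] {P : Measure Ω} {X : ℕ → Ω → ℕ} {k : ℕ} {l r : ℕ → ℝ}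

lemma integral_comp (hC : IsBDChain P X k l r) (m : ℕ) (f : ℕ → ℝ) (hf0 : f 0 = 0) :
    ∫ ω, f (X m ω) ∂P = ∑ j ∈ Finset.Icc 1 (k + m), f j * (P {ω | X m ω = j}).toReal := by
  haveI := hC.isProb
  have hae : ∀ᵐ ω ∂P, f (X m ω) =
      ∑ j ∈ Finset.Icc 1 (k + m), Set.indicator {ω | X m ω = j} (fun _ => f j) ω := by
    filter_upwards [ae_le hC] with ω hle
    rcases Nat.eq_zero_or_pos (X m ω) with h0 | hpos
    · rw [h0, hf0]
      symm; apply Finset.sum_eq_zero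
      intro j hj
      apply Set.indicator_of_notMem
      simp only [Set.mem_setOf_eq]
      have := Finset.mem_Icc.mp hj; omega
    · rw [Finset.sum_eq_single (X m ω)]
      · rw [Set.indicator_of_mem (by simp : ω ∈ {ω' | X m ω' = X m ω})]
      · intro j hj hne
        exact Set.indicator_of_notMem (by simp only [Set.mem_setOf_eq]; omega) _
      · intro hmem
        exact absurd (Finset.mem_Icc.mpr ⟨hpos, hle m⟩) hmem
  rw [integral_congr_ae hae, integral_finsum_indicator _ _ (fun j _ => measX hC m j)]

lemma integral_comp_succ (hC : IsBDChain P X k l r) (m : ℕ) (f : ℕ → ℝ) (hf0 : f 0 = 0) :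
    ∫ ω, f (X (m + 1) ω) ∂P = ∑ j ∈ Finset.Icc 1 (k + m),
      (r j * f (j + 1) + l j * f (j - 1)) * (P {ω | X m ω = j}).toReal := by
  haveI := hC.isProb
  set U : ℕ → Set Ω := fun j => {ω | X m ω = j ∧ X (m + 1) ω = j + 1} with hUdef
  set D : ℕ → Set Ω := fun j => {ω | X m ω = j ∧ X (m + 1) ω = j - 1} with hDdef
  have hUm : ∀ j, MeasurableSet (U j) := fun j => (measX hC m j).inter (measX hC (m+1) (j+1))
  have hDm : ∀ j, MeasurableSet (D j) := fun j => (measX hC m j).inter (measX hC (m+1) (j-1))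
  have hae : ∀ᵐ ω ∂P, f (X (m + 1) ω) =
      (∑ j ∈ Finset.Icc 1 (k + m), Set.indicator (U j) (fun _ => f (j + 1)) ω) +
      (∑ j ∈ Finset.Icc 1 (k + m), Set.indicator (D j) (fun _ => f (j - 1)) ω) := by
    filter_upwards [ae_le hC, ae_step hC, hC.absorb] with ω hle hstep habs
    rcases Nat.eq_zero_or_pos (X m ω) with h0 | hpos
    · rw [habs m h0, hf0]
      symm
      rw [Finset.sum_eq_zero, Finset.sum_eq_zero, add_zero]
      · intro j hj
        exact Set.indicator_of_notMem
          (by simp only [hDdef, Set.mem_setOf_eq]; have := Finset.mem_Icc.mp hj; omega) _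
      · intro j hj
        exact Set.indicator_of_notMem
          (by simp only [hUdef, Set.mem_setOf_eq]; have := Finset.mem_Icc.mp hj; omega) _
    · have hmem : X m ω ∈ Finset.Icc 1 (k + m) := Finset.mem_Icc.mpr ⟨hpos, hle m⟩
      have hz : ∀ j ∈ Finset.Icc 1 (k+m), j ≠ X m ω →
          Set.indicator (U j) (fun _ => f (j + 1)) ω = 0 ∧
          Set.indicator (D j) (fun _ => f (j - 1)) ω = 0 :=
        fun j _ hne => ⟨Set.indicator_of_notMem (fun h => hne h.1.symm) _,
          Set.indicator_of_notMem (fun h => hne h.1.symm) _⟩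
      rw [Finset.sum_eq_single (X m ω) (fun j hj hne => (hz j hj hne).1)
            (fun h => absurd hmem h),
          Finset.sum_eq_single (X m ω) (fun j hj hne => (hz j hj hne).2)
            (fun h => absurd hmem h)]
      rcases hstep m hpos with hup | hdown
      · rw [Set.indicator_of_mem (show ω ∈ U (X m ω) from ⟨rfl, hup⟩),
            Set.indicator_of_notMem (show ω ∉ D (X m ω) from fun h => by
              have := h.2; omega), add_zero, hup]
      · rw [Set.indicator_of_notMem (show ω ∉ U (X m ω) from fun h => by
              have := h.2; omega),
            Set.indicator_of_mem (show ω ∈ D (X m ω) from ⟨rfl, hdown⟩), zero_add, hdown]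
  rw [integral_congr_ae hae, integral_add
    (integrable_finset_sum _ fun j _ => (integrable_const _).indicator (hUm j))
    (integrable_finset_sum _ fun j _ => (integrable_const _).indicator (hDm j)),
    integral_finsum_indicator _ _ (fun j _ => hUm j),
    integral_finsum_indicator _ _ (fun j _ => hDm j), ← Finset.sum_add_distrib]
  refine Finset.sum_congr rfl fun j hj => ?_
  have hj1 : 1 ≤ j := (Finset.mem_Icc.mp hj).1
  have hPU : P (U j) = ENNReal.ofReal (r j) * P {ω | X m ω = j} := by
    have := hC.step_up m j hj1 Set.univ MeasurableSet.univ
    simpa using this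
  have hPD : P (D j) = ENNReal.ofReal (l j) * P {ω | X m ω = j} := by
    have := hC.step_down m j hj1 Set.univ MeasurableSet.univ
    simpa using this
  rw [hPU, hPD, ofReal_mul_toReal _ (hC.r_pos j hj1).le _ (measure_ne_top P _),
    ofReal_mul_toReal _ (hC.l_pos j hj1).le _ (measure_ne_top P _)]
  ring

end BD

namespace BD
variable {Ω : Type*} [MeasurableSpace Ω] {P : Measure Ω} {X : ℕ → Ω → ℕ} {k : ℕ} {l r : ℕ → ℝ}

lemma integral_incr (hC : IsBDChain P X k l r) (m : ℕ) (A : Set Ω)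
    (hA : MeasurableSet[natFilt X m] A) :
    ∫ ω, A.indicator (fun ω => (X (m + 1) ω : ℝ) - (X m ω : ℝ)) ω ∂P
      = ∑ j ∈ Finset.Icc 1 (k + m), (r j - l j) * (P (A ∩ {ω | X m ω = j})).toReal := by
  haveI := hC.isProb
  have hAm : MeasurableSet A := natFilt_le hC.meas m A hA
  set U : ℕ → Set Ω := fun j => A ∩ {ω | X m ω = j ∧ X (m + 1) ω = j + 1} with hUdef
  set D : ℕ → Set Ω := fun j => A ∩ {ω | X m ω = j ∧ X (m + 1) ω = j - 1} with hDdef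
  have hUm : ∀ j, MeasurableSet (U j) :=
    fun j => hAm.inter ((measX hC m j).inter (measX hC (m+1) (j+1)))
  have hDm : ∀ j, MeasurableSet (D j) :=
    fun j => hAm.inter ((measX hC m j).inter (measX hC (m+1) (j-1)))
  have hae : ∀ᵐ ω ∂P, A.indicator (fun ω => (X (m + 1) ω : ℝ) - (X m ω : ℝ)) ω =
      (∑ j ∈ Finset.Icc 1 (k + m), Set.indicator (U j) (fun _ => (1 : ℝ)) ω) +
      (∑ j ∈ Finset.Icc 1 (k + m), Set.indicator (D j) (fun _ => (-1 : ℝ)) ω) := by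
    filter_upwards [ae_le hC, ae_step hC, hC.absorb] with ω hle hstep habs
    by_cases hAω : ω ∈ A
    swap
    · rw [Set.indicator_of_notMem hAω]
      symm
      rw [Finset.sum_eq_zero, Finset.sum_eq_zero, add_zero]
      · exact fun j _ => Set.indicator_of_notMem (fun h => hAω h.1) _
      · exact fun j _ => Set.indicator_of_notMem (fun h => hAω h.1) _
    rw [Set.indicator_of_mem hAω]
    rcases Nat.eq_zero_or_pos (X m ω) with h0 | hpos
    · rw [habs m h0, h0,
        Finset.sum_eq_zero (fun j hj => Set.indicator_of_notMem
          (fun h => by have := h.2.1; have := Finset.mem_Icc.mp hj; omega) _),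
        Finset.sum_eq_zero (fun j hj => Set.indicator_of_notMem
          (fun h => by have := h.2.1; have := Finset.mem_Icc.mp hj; omega) _), add_zero]
      simp
    · have hmem : X m ω ∈ Finset.Icc 1 (k + m) := Finset.mem_Icc.mpr ⟨hpos, hle m⟩
      have hz : ∀ j ∈ Finset.Icc 1 (k + m), j ≠ X m ω →
          Set.indicator (U j) (fun _ => (1 : ℝ)) ω = 0 ∧
          Set.indicator (D j) (fun _ => (-1 : ℝ)) ω = 0 :=
        fun j _ hne => ⟨Set.indicator_of_notMem (fun h => hne h.2.1.symm) _,
          Set.indicator_of_notMem (fun h => hne h.2.1.symm) _⟩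
      rw [Finset.sum_eq_single (X m ω) (fun j hj hne => (hz j hj hne).1)
            (fun h => absurd hmem h),
          Finset.sum_eq_single (X m ω) (fun j hj hne => (hz j hj hne).2)
            (fun h => absurd hmem h)]
      rcases hstep m hpos with hup | hdown
      · rw [Set.indicator_of_mem (show ω ∈ U (X m ω) from ⟨hAω, rfl, hup⟩),
            Set.indicator_of_notMem (show ω ∉ D (X m ω) from fun h => by
              have := h.2.2; omega), add_zero, hup]
        push_cast [hup]; ring
      · rw [Set.indicator_of_notMem (show ω ∉ U (X m ω) from fun h => by
              have := h.2.2; omega),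
            Set.indicator_of_mem (show ω ∈ D (X m ω) from ⟨hAω, rfl, hdown⟩), zero_add, hdown]
        have : (X m ω - 1 : ℕ) = (X m ω : ℝ) - 1 := by push_cast [hpos]; ring
        rw [this]; ring
  rw [integral_congr_ae hae, integral_add
    (integrable_finset_sum _ fun j _ => (integrable_const _).indicator (hUm j))
    (integrable_finset_sum _ fun j _ => (integrable_const _).indicator (hDm j)),
    integral_finsum_indicator _ _ (fun j _ => hUm j),
    integral_finsum_indicator _ _ (fun j _ => hDm j), ← Finset.sum_add_distrib]
  refine Finset.sum_congr rfl fun j hj => ?_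
  have hj1 : 1 ≤ j := (Finset.mem_Icc.mp hj).1
  rw [hC.step_up m j hj1 A hA, hC.step_down m j hj1 A hA,
    ofReal_mul_toReal _ (hC.r_pos j hj1).le _ (measure_ne_top P _),
    ofReal_mul_toReal _ (hC.l_pos j hj1).le _ (measure_ne_top P _)]
  ring

end BD

noncomputable def un (l r : ℕ → ℝ) (n j : ℕ) : ℝ :=
  min (xp l r j) (xp l r n) / (l n * tp l r (n - 1))

namespace BD
variable {l r : ℕ → ℝ}

lemma xp_zero : xp l r 0 = 0 := by unfold xp; simp

lemma un_zero (hl : ∀ n, 1 ≤ n → 0 < l n) (hr : ∀ n, 1 ≤ n → 0 < r n) (n : ℕ) :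
    un l r n 0 = 0 := by
  unfold un
  rw [xp_zero, min_eq_left (xp_nonneg hl hr n), zero_div]

lemma un_nonneg (hl : ∀ n, 1 ≤ n → 0 < l n) (hr : ∀ n, 1 ≤ n → 0 < r n) (n : ℕ)
    (hn : 1 ≤ n) (j : ℕ) : 0 ≤ un l r n j := by
  unfold un
  apply div_nonneg
  · exact le_min (xp_nonneg hl hr j) (xp_nonneg hl hr n)
  · exact (mul_pos (hl n hn) (tp_pos hl hr (n - 1))).le

lemma un_harmonic (hl : ∀ n, 1 ≤ n → 0 < l n) (hr : ∀ n, 1 ≤ n → 0 < r n)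
    (hlr : ∀ n, 1 ≤ n → l n + r n = 1) (n : ℕ) (hn : 1 ≤ n) (j : ℕ) (hj : 1 ≤ j) :
    r j * un l r n (j + 1) + l j * un l r n (j - 1)
      = un l r n j - (if j = n then 1 else 0) := by
  have hc : 0 < l n * tp l r (n - 1) := mul_pos (hl n hn) (tp_pos hl hr (n - 1))
  have hxmono := fun {a b : ℕ} (h : a ≤ b) => xp_mono hl hr (l := l) (r := r) h
  have hrt : ∀ i, 1 ≤ i → r i * tp l r i = l i * tp l r (i - 1) := by
    intro i hi
    have h := tp_succ (l := l) (r := r) (i - 1)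
    rw [show i - 1 + 1 = i by omega] at h
    rw [h]
    have : r i ≠ 0 := (hr i hi).ne'
    field_simp
  have hxs : ∀ i, xp l r (i + 1) = xp l r i + tp l r i := xp_succ
  have hxj : xp l r j = xp l r (j - 1) + tp l r (j - 1) := by
    conv_lhs => rw [show j = (j - 1) + 1 by omega]
    exact hxs (j - 1)
  have hlrj := hlr j hj
  rcases lt_trichotomy j n with hcase | hcase | hcase
  · -- j < n
    unfold un
    rw [if_neg (by omega), min_eq_left (hxmono (by omega)),
      min_eq_left (hxmono (by omega)), min_eq_left (hxmono (by omega)),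
      sub_zero, mul_div_assoc', mul_div_assoc', ← add_div]
    congr 1
    linear_combination r j * hxs j + xp l r j * hlrj + hrt j hj - l j * hxj
  · -- j = n
    subst hcase
    unfold un
    rw [if_pos rfl, min_eq_right (hxmono (by omega)), min_eq_left (hxmono (by omega)),
      min_eq_left le_rfl, mul_div_assoc', mul_div_assoc', ← add_div,
      show (1:ℝ) = (l j * tp l r (j-1)) / (l j * tp l r (j-1)) from (div_self hc.ne').symm,
      ← sub_div]
    congr 1
    linear_combination xp l r j * hlrj - l j * hxj
  · -- j > n
    unfold un
    rw [if_neg (by omega), min_eq_right (hxmono (by omega)),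
      min_eq_right (hxmono (by omega)), min_eq_right (hxmono (by omega)),
      sub_zero, mul_div_assoc', mul_div_assoc', ← add_div]
    congr 1
    linear_combination xp l r n * hlrj
  
end BD

namespace BD
variable {Ω : Type*} [MeasurableSpace Ω] {P : Measure Ω} {X : ℕ → Ω → ℕ} {k : ℕ} {l r : ℕ → ℝ}

lemma occupation_aux (hC : IsBDChain P X k l r) (n : ℕ) (hn : 1 ≤ n) (M : ℕ) :
    (∑ m ∈ Finset.range M, (P {ω | X m ω = n}).toReal) + ∫ ω, un l r n (X M ω) ∂P
      = un l r n k := by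
  haveI := hC.isProb
  induction M with
  | zero =>
    rw [Finset.range_zero, Finset.sum_empty, zero_add]
    rw [integral_congr_ae (by filter_upwards [hC.init] with ω h0; rw [h0])]
    simp
  | succ M ih =>
    have hstep : ∫ ω, un l r n (X (M + 1) ω) ∂P
        = (∫ ω, un l r n (X M ω) ∂P) - (P {ω | X M ω = n}).toReal := by
      rw [integral_comp_succ hC M _ (un_zero hC.l_pos hC.r_pos n),
        integral_comp hC M _ (un_zero hC.l_pos hC.r_pos n)]
      have hterm : ∀ j ∈ Finset.Icc 1 (k + M),
          (r j * un l r n (j + 1) + l j * un l r n (j - 1)) * (P {ω | X M ω = j}).toReal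
          = un l r n j * (P {ω | X M ω = j}).toReal
            - (if j = n then (P {ω | X M ω = j}).toReal else 0) := by
        intro j hj
        rw [un_harmonic hC.l_pos hC.r_pos hC.lr_one n hn j (Finset.mem_Icc.mp hj).1]
        by_cases h : j = n
        · rw [if_pos h, if_pos h]; ring
        · rw [if_neg h, if_neg h]; ring
      rw [Finset.sum_congr rfl hterm, Finset.sum_sub_distrib, Finset.sum_ite_eq' _ n]
      by_cases hmem : n ∈ Finset.Icc 1 (k + M)
      · rw [if_pos hmem]
      · rw [if_neg hmem]
        have : P {ω | X M ω = n} = 0 := by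
          apply meas_gt_eq_zero hC
          simp only [Finset.mem_Icc] at hmem
          omega
        rw [this]
        simp
    rw [Finset.sum_range_succ, hstep]
    linarith [ih]

lemma occupation (hC : IsBDChain P X k l r) (n : ℕ) (hn : 1 ≤ n) (M : ℕ) :
    ∑ m ∈ Finset.range M, (P {ω | X m ω = n}).toReal ≤ un l r n k := by
  haveI := hC.isProb
  have h := occupation_aux hC n hn M
  have hpos : 0 ≤ ∫ ω, un l r n (X M ω) ∂P :=
    integral_nonneg fun ω => un_nonneg hC.l_pos hC.r_pos n hn _
  linarith

end BD

namespace BD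
variable {Ω : Type*} [MeasurableSpace Ω] {P : Measure Ω} {X : ℕ → Ω → ℕ} {k : ℕ} {l r : ℕ → ℝ}

lemma lintegral_nat {T : Ω → ℕ} (hT : Measurable T) :
    ∫⁻ ω, (T ω : ℝ≥0∞) ∂P = ∑' m : ℕ, P {ω | m < T ω} := by
  have hpt : ∀ ω, (T ω : ℝ≥0∞)
      = ∑' m : ℕ, Set.indicator {ω | m < T ω} (fun _ => (1 : ℝ≥0∞)) ω := by
    intro ω
    have h1 : (∑' m : ℕ, Set.indicator {ω' | m < T ω'} (fun _ => (1 : ℝ≥0∞)) ω)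
        = ∑ m ∈ Finset.range (T ω), Set.indicator {ω' | m < T ω'} (fun _ => (1 : ℝ≥0∞)) ω :=
      tsum_eq_sum (fun m hm => Set.indicator_of_notMem
        (s := {ω' | m < T ω'}) (fun hc => hm (Finset.mem_range.mpr hc)) _)
    rw [h1, Finset.sum_congr rfl (fun m hm =>
      Set.indicator_of_mem (s := {ω' | m < T ω'}) (Finset.mem_range.mp hm) _),
      Finset.sum_const, Finset.card_range, nsmul_eq_mul, mul_one]
  have hmeas : ∀ m : ℕ, MeasurableSet {ω | m < T ω} := by
    intro m
    exact hT (by trivial : MeasurableSet {j | m < j})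
  rw [lintegral_congr hpt, lintegral_tsum (fun m =>
    (measurable_const.indicator (hmeas m)).aemeasurable)]
  exact tsum_congr fun m => by rw [lintegral_indicator_const (hmeas m), one_mul]

lemma integrable_T [IsFiniteMeasure P] {T : Ω → ℕ} (hT : Measurable T)
    (hTi : ∫⁻ ω, (T ω : ℝ≥0∞) ∂P < ⊤) : Integrable (fun ω => (T ω : ℝ)) P := by
  refine ⟨((measurable_from_top (f := fun n : ℕ => (n : ℝ))).comp hT).aestronglyMeasurable, ?_⟩
  have heq : ∫⁻ ω, (‖(T ω : ℝ)‖₊ : ℝ≥0∞) ∂P = ∫⁻ ω, (T ω : ℝ≥0∞) ∂P := by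
    refine lintegral_congr fun ω => ?_
    rw [Real.nnnorm_natCast]
    simp
  exact lt_of_le_of_lt (le_of_eq heq) hTi

lemma unk_bound (hl : ∀ n, 1 ≤ n → 0 < l n) (hr : ∀ n, 1 ≤ n → 0 < r n)
    (k : ℕ) (j : ℕ) (hj : 1 ≤ j) :
    |r j - l j| * un l r j k ≤ xp l r k * |1 / tp l r j - 1 / tp l r (j - 1)| := by
  have hc : 0 < l j * tp l r (j - 1) := mul_pos (hl j hj) (tp_pos hl hr (j - 1))
  have hkey : 1 / tp l r j - 1 / tp l r (j - 1) = (r j - l j) / (l j * tp l r (j - 1)) := by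
    have h := tp_key hl hr (j - 1)
    rwa [show j - 1 + 1 = j by omega] at h
  rw [hkey, abs_div, abs_of_pos hc]
  have h1 : un l r j k ≤ xp l r k / (l j * tp l r (j - 1)) := by
    unfold un
    gcongr
    exact min_le_left _ _
  calc |r j - l j| * un l r j k
      ≤ |r j - l j| * (xp l r k / (l j * tp l r (j - 1))) :=
        mul_le_mul_of_nonneg_left h1 (abs_nonneg _)
    _ = xp l r k * (|r j - l j| / (l j * tp l r (j - 1))) := by ring

end BD

/-- If the chain hits `0` a.s. and `Σ_{n=1}^∞ |1/t_n - 1/t_{n-1}| < ∞`,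
then for every stopping time `T` with `E[T] < ∞`,
`E[X_T] ≤ k + x_k Σ_{n=1}^∞ |1/t_n - 1/t_{n-1}|`; in particular the supremum of
`E[X_T]` over all such stopping times is finite. -/
theorem stmt14 {Ω : Type*} [MeasurableSpace Ω] (P : Measure Ω) (X : ℕ → Ω → ℕ)
    (k : ℕ) (l r : ℕ → ℝ) (hC : IsBDChain P X k l r)
    (hone : P {ω | ∃ m : ℕ, X m ω = 0} = 1)
    (hsum : Summable fun n : ℕ => |1 / tp l r (n + 1) - 1 / tp l r n|) :
    (∀ T : Ω → ℕ, IsBDStop X T → ∫⁻ ω, (T ω : ℝ≥0∞) ∂P < ⊤ →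
      ∫ ω, (X (T ω) ω : ℝ) ∂P ≤
        k + xp l r k * ∑' n : ℕ, |1 / tp l r (n + 1) - 1 / tp l r n|) ∧
    BddAbove {y : ℝ | ∃ T : Ω → ℕ, IsBDStop X T ∧
      (∫⁻ ω, (T ω : ℝ≥0∞) ∂P < ⊤) ∧ y = ∫ ω, (X (T ω) ω : ℝ) ∂P} := by
  haveI := hC.isProb
  set S : ℝ := ∑' n : ℕ, |1 / tp l r (n + 1) - 1 / tp l r n| with hSdef
  have main : ∀ T : Ω → ℕ, IsBDStop X T → ∫⁻ ω, (T ω : ℝ≥0∞) ∂P < ⊤ →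
      ∫ ω, (X (T ω) ω : ℝ) ∂P ≤ k + xp l r k * S := by
    intro T hT hTi
    have hTm : Measurable T := BD.meas_T hC.meas hT
    set A : ℕ → Set Ω := fun m => {ω | m < T ω} with hAdef
    have hAf : ∀ m, MeasurableSet[natFilt X m] (A m) := fun m => BD.meas_Tgt hT m
    have hAmb : ∀ m, MeasurableSet (A m) := fun m => BD.natFilt_le hC.meas m _ (hAf m)
    have hlint : ∫⁻ ω, (T ω : ℝ≥0∞) ∂P = ∑' m : ℕ, P (A m) := BD.lintegral_nat hTm
    set DD : ℕ → Ω → ℝ :=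
      fun m ω => (A m).indicator (fun ω => (X (m + 1) ω : ℝ) - (X m ω : ℝ)) ω with hDDdef
    have hDDmeas : ∀ m, Measurable (DD m) := fun m =>
      (((measurable_from_top (f := fun n : ℕ => (n : ℝ))).comp (hC.meas (m + 1))).sub
        ((measurable_from_top (f := fun n : ℕ => (n : ℝ))).comp (hC.meas m))).indicator (hAmb m)
    -- pointwise telescoping
    have htel : ∀ ω, (∑' m : ℕ, DD m ω) = (X (T ω) ω : ℝ) - (X 0 ω : ℝ) := by
      intro ω
      have h1 : (∑' m : ℕ, DD m ω) = ∑ m ∈ Finset.range (T ω), DD m ω :=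
        tsum_eq_sum (fun m hm => Set.indicator_of_notMem
          (s := A m) (fun hc => hm (Finset.mem_range.mpr hc)) _)
      rw [h1, Finset.sum_congr rfl (fun m hm =>
        Set.indicator_of_mem (s := A m) (Finset.mem_range.mp hm) _),
        Finset.sum_range_sub (f := fun m => (X m ω : ℝ))]
    -- the L¹ bound
    have hnorm : ∀ m, ∫⁻ ω, (‖DD m ω‖₊ : ℝ≥0∞) ∂P ≤ P (A m) := by
      intro m
      have hb : ∀ᵐ ω ∂P, (‖DD m ω‖₊ : ℝ≥0∞) ≤ (A m).indicator (fun _ => (1 : ℝ≥0∞)) ω := by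
        filter_upwards [BD.ae_step hC, hC.absorb] with ω hstep habs
        by_cases hA : ω ∈ A m
        · have hDeq : DD m ω = (X (m + 1) ω : ℝ) - (X m ω : ℝ) := Set.indicator_of_mem hA _
          rw [Set.indicator_of_mem hA, hDeq]
          have habs1 : |(X (m + 1) ω : ℝ) - (X m ω : ℝ)| ≤ 1 := by
            rcases Nat.eq_zero_or_pos (X m ω) with h0 | hpos
            · rw [habs m h0, h0]; simp
            · rcases hstep m hpos with h | h
              · rw [h]; push_cast
                rw [show ((X m ω : ℝ) + 1) - (X m ω : ℝ) = 1 by ring, abs_one]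
              · rw [h, Nat.cast_sub hpos]; push_cast
                rw [show ((X m ω : ℝ) - 1) - (X m ω : ℝ) = -1 by ring, abs_neg, abs_one]
          rw [← ENNReal.coe_one, ENNReal.coe_le_coe, ← NNReal.coe_le_coe, coe_nnnorm,
            NNReal.coe_one, Real.norm_eq_abs]
          exact habs1
        · have hDeq : DD m ω = 0 := Set.indicator_of_notMem hA _
          rw [Set.indicator_of_notMem hA, hDeq]
          simp
      calc ∫⁻ ω, (‖DD m ω‖₊ : ℝ≥0∞) ∂P
          ≤ ∫⁻ ω, (A m).indicator (fun _ => (1 : ℝ≥0∞)) ω ∂P := lintegral_mono_ae hb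
        _ = P (A m) := by rw [lintegral_indicator_const (hAmb m), one_mul]
    have hfin : (∑' m : ℕ, ∫⁻ ω, (‖DD m ω‖₊ : ℝ≥0∞) ∂P) ≠ ⊤ :=
      ne_top_of_le_ne_top (by rw [← hlint]; exact hTi.ne) (ENNReal.tsum_le_tsum hnorm)
    have hswap : ∫ ω, (∑' m : ℕ, DD m ω) ∂P = ∑' m : ℕ, ∫ ω, DD m ω ∂P :=
      integral_tsum (fun m => (hDDmeas m).aestronglyMeasurable) hfin
    have hIm : ∀ m, ∫ ω, DD m ω ∂P = ∑ j ∈ Finset.Icc 1 (k + m),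
        (r j - l j) * (P (A m ∩ {ω | X m ω = j})).toReal :=
      fun m => BD.integral_incr hC m (A m) (hAf m)
    have hπ0 : ∀ m j, (0:ℝ) ≤ (P (A m ∩ {ω | X m ω = j})).toReal :=
      fun m j => ENNReal.toReal_nonneg
    have habsI : ∀ m, |∫ ω, DD m ω ∂P| ≤ ∑ j ∈ Finset.Icc 1 (k + m),
        |r j - l j| * (P (A m ∩ {ω | X m ω = j})).toReal := by
      intro m
      rw [hIm m]
      refine (Finset.abs_sum_le_sum_abs _ _).trans (Finset.sum_le_sum fun j hj => ?_)
      rw [abs_mul, abs_of_nonneg (hπ0 m j)]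
    have hxk : 0 ≤ xp l r k := BD.xp_nonneg hC.l_pos hC.r_pos k
    have hpartial : ∀ M : ℕ, (∑ m ∈ Finset.range M, |∫ ω, DD m ω ∂P|) ≤ xp l r k * S := by
      intro M
      have step1 : ∀ m ∈ Finset.range M,
          (∑ j ∈ Finset.Icc 1 (k + m), |r j - l j| * (P (A m ∩ {ω | X m ω = j})).toReal)
          ≤ ∑ j ∈ Finset.Icc 1 (k + M), |r j - l j| * (P (A m ∩ {ω | X m ω = j})).toReal := by
        intro m hm
        refine Finset.sum_le_sum_of_subset_of_nonneg
          (Finset.Icc_subset_Icc le_rfl (by simp at hm; omega))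
          (fun j _ _ => mul_nonneg (abs_nonneg _) (hπ0 m j))
      calc ∑ m ∈ Finset.range M, |∫ ω, DD m ω ∂P|
          ≤ ∑ m ∈ Finset.range M, ∑ j ∈ Finset.Icc 1 (k + M),
              |r j - l j| * (P (A m ∩ {ω | X m ω = j})).toReal :=
            Finset.sum_le_sum fun m hm => (habsI m).trans (step1 m hm)
        _ = ∑ j ∈ Finset.Icc 1 (k + M), |r j - l j| *
              ∑ m ∈ Finset.range M, (P (A m ∩ {ω | X m ω = j})).toReal := by
            rw [Finset.sum_comm]
            exact Finset.sum_congr rfl fun j _ => by rw [Finset.mul_sum]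
        _ ≤ ∑ j ∈ Finset.Icc 1 (k + M), |r j - l j| * un l r j k := by
            refine Finset.sum_le_sum fun j hj => mul_le_mul_of_nonneg_left ?_ (abs_nonneg _)
            refine le_trans (Finset.sum_le_sum fun m _ => ?_)
              (BD.occupation hC j (Finset.mem_Icc.mp hj).1 M)
            exact ENNReal.toReal_mono (measure_ne_top P _)
              (measure_mono Set.inter_subset_right)
        _ ≤ ∑ j ∈ Finset.Icc 1 (k + M), xp l r k * |1 / tp l r j - 1 / tp l r (j - 1)| :=
            Finset.sum_le_sum fun j hj =>
              BD.unk_bound hC.l_pos hC.r_pos k j (Finset.mem_Icc.mp hj).1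
        _ = xp l r k * ∑ i ∈ Finset.range (k + M), |1 / tp l r (i + 1) - 1 / tp l r i| := by
            rw [← Finset.mul_sum]
            congr 1
            rw [← Finset.Ico_add_one_right_eq_Icc, Finset.sum_Ico_eq_sum_range]
            refine Finset.sum_congr (by congr 1) fun i _ => ?_
            rw [show 1 + i = i + 1 by omega, show i + 1 - 1 = i by omega]
        _ ≤ xp l r k * S :=
            mul_le_mul_of_nonneg_left
              (Summable.sum_le_tsum _ (fun i _ => abs_nonneg _) hsum) hxk
    have habs_summable : Summable (fun m => |∫ ω, DD m ω ∂P|) :=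
      summable_of_sum_range_le (fun m => abs_nonneg _) hpartial
    have hsummable : Summable (fun m => ∫ ω, DD m ω ∂P) := habs_summable.of_abs
    have htsum_le : (∑' m : ℕ, ∫ ω, DD m ω ∂P) ≤ xp l r k * S :=
      le_trans (Summable.tsum_le_tsum (fun m => le_abs_self _) hsummable habs_summable)
        (Summable.tsum_le_of_sum_range_le habs_summable hpartial)
    -- integrability of X_T and final decomposition
    have hZm : Measurable (fun ω => (X (T ω) ω : ℝ)) := by
      have hZN : Measurable (fun ω => X (T ω) ω) := by
        apply measurable_to_countable'
        intro v
        have hset : (fun ω => X (T ω) ω) ⁻¹' {v}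
            = ⋃ m, ({ω | T ω = m} ∩ {ω | X m ω = v}) := by
          ext ω
          simp only [Set.mem_preimage, Set.mem_singleton_iff, Set.mem_iUnion,
            Set.mem_inter_iff, Set.mem_setOf_eq]
          constructor
          · intro h; exact ⟨T ω, rfl, h⟩
          · rintro ⟨m, rfl, h⟩; exact h
        rw [hset]
        exact MeasurableSet.iUnion fun m =>
          (BD.natFilt_le hC.meas m _ (hT m)).inter (BD.measX hC m v)
      exact (measurable_from_top (f := fun n : ℕ => (n : ℝ))).comp hZN
    have hTint' : Integrable (fun ω => (T ω : ℝ)) P := BD.integrable_T hTm hTi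
    have hXTint : Integrable (fun ω => (X (T ω) ω : ℝ)) P := by
      refine Integrable.mono' ((integrable_const (k : ℝ)).add hTint')
        hZm.aestronglyMeasurable ?_
      filter_upwards [BD.ae_le hC] with ω hle
      rw [Real.norm_eq_abs, abs_of_nonneg (by positivity)]
      show (X (T ω) ω : ℝ) ≤ (k : ℝ) + T ω
      exact_mod_cast hle (T ω)
    have hX0int : Integrable (fun ω => (X 0 ω : ℝ)) P := by
      refine (integrable_const (k : ℝ)).congr ?_
      filter_upwards [hC.init] with ω h0
      rw [h0]
    have hX0 : ∫ ω, (X 0 ω : ℝ) ∂P = k := by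
      rw [integral_congr_ae (show (fun ω => (X 0 ω : ℝ)) =ᵐ[P] fun _ => (k : ℝ) by
        filter_upwards [hC.init] with ω h0; rw [h0])]
      simp
    have hdecomp : ∫ ω, (X (T ω) ω : ℝ) ∂P = k + ∑' m : ℕ, ∫ ω, DD m ω ∂P := by
      have h1 : ∫ ω, ((X (T ω) ω : ℝ) - (X 0 ω : ℝ)) ∂P
          = (∫ ω, (X (T ω) ω : ℝ) ∂P) - ∫ ω, (X 0 ω : ℝ) ∂P := integral_sub hXTint hX0int
      have h2 : (fun ω => ∑' m : ℕ, DD m ω)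
          = fun ω => (X (T ω) ω : ℝ) - (X 0 ω : ℝ) := funext htel
      rw [h2, h1, hX0] at hswap
      linarith [hswap]
    rw [hdecomp]
    linarith [htsum_le]
  refine ⟨fun T hT hTi => main T hT hTi, ⟨(k : ℝ) + xp l r k * S, ?_⟩⟩
  rintro y ⟨T, hT, hTi, rfl⟩
  exact main T hT hTi
end

section
/- Let X be the birth–death chain with l_n = n/(2n+1) and r_n = (n+1)/(2n+1) for n ≥ 1, started at k ≥ 1. Then t_n = 1/(n+1) for all n ≥ 0, the chain hits 0 with probability 1, and E[X_m] → +∞ as m → ∞. -/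
open MeasureTheory Filter Topology Finset
open scoped ENNReal NNReal Classical

set_option linter.unusedSectionVars false

section BD
variable {Ω : Type*} [MeasurableSpace Ω] {P : MeasureTheory.Measure Ω} {X : ℕ → Ω → ℕ} {k : ℕ} {l r : ℕ → ℝ}

lemma natFilt_le (hm : ∀ i, Measurable (X i)) (m : ℕ) : natFilt X m ≤ ‹MeasurableSpace Ω› := by
  apply iSup_le; intro i; apply iSup_le; intro _
  have : (⊤ : MeasurableSpace ℕ) = (inferInstance : MeasurableSpace ℕ) := rfl
  rw [this]
  exact (hm i).comap_le

lemma natFilt_mono {m m' : ℕ} (h : m ≤ m') : natFilt X m ≤ natFilt X m' := by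
  apply iSup_le; intro i; apply iSup_le; intro hi
  exact le_iSup₂ (f := fun i (_ : i ∈ Finset.range (m' + 1)) => MeasurableSpace.comap (X i) ⊤) i
    (Finset.mem_range.2 (lt_of_lt_of_le (Finset.mem_range.1 hi) (by omega)))

lemma natFilt_meas {m j : ℕ} (hj : j ≤ m) (s : Set ℕ) :
    MeasurableSet[natFilt X m] (X j ⁻¹' s) := by
  have h2 : MeasurableSpace.comap (X j) ⊤ ≤ natFilt X m :=
    le_iSup₂ (f := fun i (_ : i ∈ Finset.range (m + 1)) => MeasurableSpace.comap (X i) ⊤) j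
      (Finset.mem_range.2 (by omega))
  exact h2 _ ⟨s, trivial, rfl⟩

lemma natFilt_meas_eq {m j : ℕ} (hj : j ≤ m) (n : ℕ) :
    MeasurableSet[natFilt X m] {ω | X j ω = n} :=
  natFilt_meas hj {n}

variable (hC : IsBDChain P X k l r)
include hC

/-- A.s. the two step events exhaust `A ∩ {X m = n}`. -/
lemma step_rest (m n : ℕ) (hn : 1 ≤ n) (A : Set Ω) (hA : MeasurableSet[natFilt X m] A) :
    P (A ∩ {ω | X m ω = n ∧ X (m+1) ω ≠ n + 1 ∧ X (m+1) ω ≠ n - 1}) = 0 := by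
  have := hC.isProb
  set S : Set Ω := A ∩ {ω | X m ω = n} with hS
  have hAmb : MeasurableSet A := natFilt_le hC.meas m A hA
  have hSm : MeasurableSet S := hAmb.inter ((hC.meas m) (measurableSet_singleton n))
  set U : Set Ω := A ∩ {ω | X m ω = n ∧ X (m+1) ω = n + 1} with hU
  set D : Set Ω := A ∩ {ω | X m ω = n ∧ X (m+1) ω = n - 1} with hD
  have hUm : MeasurableSet U := by
    have : U = A ∩ ((X m ⁻¹' {n}) ∩ (X (m+1) ⁻¹' {n+1})) := by
      ext ω; simp [hU, Set.mem_inter_iff]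
    rw [this]
    exact hAmb.inter (((hC.meas m) (measurableSet_singleton n)).inter
      ((hC.meas (m+1)) (measurableSet_singleton (n+1))))
  have hDm : MeasurableSet D := by
    have : D = A ∩ ((X m ⁻¹' {n}) ∩ (X (m+1) ⁻¹' {n-1})) := by
      ext ω; simp [hD, Set.mem_inter_iff]
    rw [this]
    exact hAmb.inter (((hC.meas m) (measurableSet_singleton n)).inter
      ((hC.meas (m+1)) (measurableSet_singleton (n-1))))
  have hdisj : Disjoint U D := by
    apply Set.disjoint_left.2
    rintro ω ⟨_, _, h1⟩ ⟨_, _, h2⟩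
    omega
  have hsum : P (U ∪ D) = P S := by
    rw [measure_union hdisj hDm, hC.step_up m n hn A hA, hC.step_down m n hn A hA,
      ← add_mul, ← ENNReal.ofReal_add (le_of_lt (hC.r_pos n hn)) (le_of_lt (hC.l_pos n hn))]
    have : r n + l n = 1 := by rw [add_comm]; exact hC.lr_one n hn
    rw [this, ENNReal.ofReal_one, one_mul]
  have hsub : U ∪ D ⊆ S := by
    rintro ω (⟨h1, h2, _⟩ | ⟨h1, h2, _⟩) <;> exact ⟨h1, h2⟩
  have hrest : A ∩ {ω | X m ω = n ∧ X (m+1) ω ≠ n + 1 ∧ X (m+1) ω ≠ n - 1} = S \ (U ∪ D) := by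
    ext ω
    simp only [Set.mem_inter_iff, Set.mem_setOf_eq, Set.mem_diff, Set.mem_union, hS, hU, hD]
    tauto
  rw [hrest]
  have h1 : P (S \ (U ∪ D)) = P S - P (U ∪ D) :=
    measure_diff hsub (hUm.union hDm).nullMeasurableSet (measure_ne_top P _)
  rw [h1, hsum, tsub_self]

end BD

section BD2
variable {Ω : Type*} [MeasurableSpace Ω] {P : MeasureTheory.Measure Ω} {X : ℕ → Ω → ℕ} {k : ℕ} {l r : ℕ → ℝ}

lemma lintegral_partition (j : ℕ) {S : Set Ω} (hS : MeasurableSet S)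
    (hX : ∀ i, Measurable (X i)) (g : Ω → ℝ≥0∞) :
    ∫⁻ ω in S, g ω ∂P = ∑' n : ℕ, ∫⁻ ω in S ∩ {ω | X j ω = n}, g ω ∂P := by
  have hU : S = ⋃ n : ℕ, S ∩ {ω | X j ω = n} := by
    ext ω; simp [Set.mem_iUnion]
  have hm : ∀ n : ℕ, MeasurableSet (S ∩ {ω | X j ω = n}) :=
    fun n => hS.inter ((hX j) (measurableSet_singleton n))
  have hd : Pairwise (Function.onFun Disjoint (fun n : ℕ => S ∩ {ω | X j ω = n})) := by
    intro a b hab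
    apply Set.disjoint_left.2
    rintro ω ⟨_, h1⟩ ⟨_, h2⟩
    exact hab (h1 ▸ h2 ▸ rfl)
  conv_lhs => rw [hU]
  exact MeasureTheory.lintegral_iUnion hm hd g

lemma setLintegral_comp (j : ℕ) {S : Set Ω} (hS : MeasurableSet S)
    (hX : ∀ i, Measurable (X i)) (f : ℕ → ℝ≥0∞) :
    ∫⁻ ω in S, f (X j ω) ∂P = ∑' n : ℕ, f n * P (S ∩ {ω | X j ω = n}) := by
  rw [lintegral_partition j hS hX]
  congr 1
  ext n
  have hm : MeasurableSet (S ∩ {ω | X j ω = n}) :=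
    hS.inter ((hX j) (measurableSet_singleton n))
  rw [show ∫⁻ ω in S ∩ {ω | X j ω = n}, f (X j ω) ∂P
      = ∫⁻ _ in S ∩ {ω | X j ω = n}, f n ∂P from
    MeasureTheory.setLIntegral_congr_fun_ae hm (Filter.Eventually.of_forall (fun ω hω => by
      rw [hω.2]))]
  simp [MeasureTheory.setLIntegral_const]

variable (hC : IsBDChain P X k l r)
include hC

lemma onestep (m n : ℕ) (hn : 1 ≤ n) (A : Set Ω) (hA : MeasurableSet[natFilt X m] A)
    (f : ℕ → ℝ≥0∞) :
    ∫⁻ ω in A ∩ {ω | X m ω = n}, f (X (m+1) ω) ∂P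
      = (ENNReal.ofReal (r n) * f (n+1) + ENNReal.ofReal (l n) * f (n-1))
          * P (A ∩ {ω | X m ω = n}) := by
  have hAmb : MeasurableSet A := natFilt_le hC.meas m A hA
  set S : Set Ω := A ∩ {ω | X m ω = n} with hSdef
  have hS : MeasurableSet S := hAmb.inter ((hC.meas m) (measurableSet_singleton n))
  rw [setLintegral_comp (m+1) hS hC.meas f]
  have hup : S ∩ {ω | X (m+1) ω = n+1} = A ∩ {ω | X m ω = n ∧ X (m+1) ω = n+1} := by
    ext ω; simp [hSdef, Set.mem_inter_iff, and_assoc]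
  have hdn : S ∩ {ω | X (m+1) ω = n-1} = A ∩ {ω | X m ω = n ∧ X (m+1) ω = n-1} := by
    ext ω; simp [hSdef, Set.mem_inter_iff, and_assoc]
  have hzero : ∀ n' : ℕ, n' ∉ ({n+1, n-1} : Finset ℕ) →
      f n' * P (S ∩ {ω | X (m+1) ω = n'}) = 0 := by
    intro n' hn'
    simp only [Finset.mem_insert, Finset.mem_singleton] at hn'
    push_neg at hn'
    have hsub : S ∩ {ω | X (m+1) ω = n'} ⊆
        A ∩ {ω | X m ω = n ∧ X (m+1) ω ≠ n + 1 ∧ X (m+1) ω ≠ n - 1} := by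
      rintro ω ⟨⟨hA', hXm⟩, hX'⟩
      refine ⟨hA', hXm, ?_, ?_⟩ <;> simp only [Set.mem_setOf_eq] at hX' <;> omega
    rw [measure_mono_null hsub (step_rest hC m n hn A hA), mul_zero]
  rw [tsum_eq_sum (s := ({n+1, n-1} : Finset ℕ)) hzero]
  rw [Finset.sum_pair (by omega : n+1 ≠ n-1)]
  rw [hup, hdn, hC.step_up m n hn A hA, hC.step_down m n hn A hA]
  ring

lemma absorb0 (m : ℕ) {S : Set Ω} (hS : MeasurableSet S) (hsub : S ⊆ {ω | X m ω = 0})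
    (f : ℕ → ℝ≥0∞) :
    ∫⁻ ω in S, f (X (m+1) ω) ∂P = f 0 * P S := by
  rw [show ∫⁻ ω in S, f (X (m+1) ω) ∂P = ∫⁻ _ in S, f 0 ∂P from
    MeasureTheory.setLIntegral_congr_fun_ae hS (hC.absorb.mono (fun ω hω hωS => by
      rw [hω m (hsub hωS)]))]
  simp [MeasureTheory.setLIntegral_const]

lemma exp_step (m : ℕ) (A : Set Ω) (hA : MeasurableSet[natFilt X m] A) (f : ℕ → ℝ≥0∞) :
    ∫⁻ ω in A, f (X (m+1) ω) ∂P
      = ∑' n : ℕ, (if n = 0 then f 0 else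
          ENNReal.ofReal (r n) * f (n+1) + ENNReal.ofReal (l n) * f (n-1))
            * P (A ∩ {ω | X m ω = n}) := by
  have hAmb : MeasurableSet A := natFilt_le hC.meas m A hA
  rw [lintegral_partition m hAmb hC.meas]
  apply tsum_congr
  intro n
  rcases Nat.eq_zero_or_pos n with hn | hn
  · subst hn
    simp only [if_pos rfl]
    exact absorb0 hC m (hAmb.inter ((hC.meas m) (measurableSet_singleton 0)))
      (fun ω hω => hω.2) f
  · rw [if_neg (by omega)]
    exact onestep hC m n hn A hA f

end BD2

noncomputable def Hh : ℕ → ℝ := fun n => ∑ i ∈ Finset.range n, (1:ℝ)/(i+1)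

lemma Hh_zero : Hh 0 = 0 := by simp [Hh]

lemma Hh_succ (n : ℕ) : Hh (n+1) = Hh n + 1/((n:ℝ)+1) := by
  simp [Hh, Finset.sum_range_succ]

lemma Hh_nonneg (n : ℕ) : 0 ≤ Hh n := by
  apply Finset.sum_nonneg; intro i _; positivity

lemma Hh_mono : Monotone Hh := by
  apply monotone_nat_of_le_succ
  intro n
  rw [Hh_succ]
  have : (0:ℝ) < 1/((n:ℝ)+1) := by positivity
  linarith

lemma Hh_one_le {n : ℕ} (hn : 1 ≤ n) : 1 ≤ Hh n := by
  calc (1:ℝ) = Hh 1 := by simp [Hh]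
    _ ≤ Hh n := Hh_mono hn

lemma Hh_le_linear (N : ℕ) : ∀ n : ℕ, Hh n ≤ Hh N + n * (1/((N:ℝ)+1)) := by
  intro n
  induction n with
  | zero => simp [Hh_zero, Hh_nonneg]
  | succ n ih =>
    rcases le_or_gt (n+1) N with h | h
    · have h5 := Hh_mono h
      have h6 : (0:ℝ) ≤ (((n:ℕ):ℝ) + 1) * (1/((N:ℝ)+1)) := by positivity
      push_cast
      linarith
    · rw [Hh_succ]
      have h1 : 1/((n:ℝ)+1) ≤ 1/((N:ℝ)+1) := by
        apply one_div_le_one_div_of_le (by positivity)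
        have h7 : N ≤ n := by omega
        have h8 : (N:ℝ) ≤ (n:ℝ) := by exact_mod_cast h7
        linarith
      push_cast
      push_cast at ih
      linarith

lemma Hh_harmonic (l r : ℕ → ℝ)
    (hl : ∀ n : ℕ, 1 ≤ n → l n = (n : ℝ) / (2 * n + 1))
    (hr : ∀ n : ℕ, 1 ≤ n → r n = ((n : ℝ) + 1) / (2 * n + 1))
    (n : ℕ) (hn : 1 ≤ n) :
    r n * Hh (n+1) + l n * Hh (n-1) = Hh n := by
  obtain ⟨j, rfl⟩ : ∃ j, n = j + 1 := ⟨n - 1, by omega⟩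
  rw [hl _ hn, hr _ hn]
  simp only [Nat.add_sub_cancel]
  rw [Hh_succ (j+1), Hh_succ j]
  have h1 : (0:ℝ) < 2 * ((j:ℕ)+1:ℕ) + 1 := by positivity
  have h2 : (0:ℝ) < ((j:ℕ):ℝ) + 1 := by positivity
  have h3 : (0:ℝ) < (((j:ℕ)+1:ℕ):ℝ) + 1 := by push_cast; positivity
  field_simp
  push_cast
  ring

lemma Hh_tendsto : Filter.Tendsto Hh Filter.atTop Filter.atTop :=
  Real.tendsto_sum_range_one_div_nat_succ_atTop

/-- `ℝ≥0∞`-valued harmonicity. -/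
lemma Hh_harmonicE (l r : ℕ → ℝ)
    (hlp : ∀ n, 1 ≤ n → 0 < l n) (hrp : ∀ n, 1 ≤ n → 0 < r n)
    (hl : ∀ n : ℕ, 1 ≤ n → l n = (n : ℝ) / (2 * n + 1))
    (hr : ∀ n : ℕ, 1 ≤ n → r n = ((n : ℝ) + 1) / (2 * n + 1))
    (n : ℕ) (hn : 1 ≤ n) :
    ENNReal.ofReal (r n) * ENNReal.ofReal (Hh (n+1))
      + ENNReal.ofReal (l n) * ENNReal.ofReal (Hh (n-1)) = ENNReal.ofReal (Hh n) := by
  rw [← ENNReal.ofReal_mul (le_of_lt (hrp n hn)), ← ENNReal.ofReal_mul (le_of_lt (hlp n hn)),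
    ← ENNReal.ofReal_add (by nlinarith [Hh_nonneg (n+1), hrp n hn] : (0:ℝ) ≤ r n * Hh (n+1))
      (by nlinarith [Hh_nonneg (n-1), hlp n hn] : (0:ℝ) ≤ l n * Hh (n-1)),
    Hh_harmonic l r hl hr n hn]

section BD3
variable {Ω : Type*} [MeasurableSpace Ω] {P : MeasureTheory.Measure Ω} {X : ℕ → Ω → ℕ} {k : ℕ} {l r : ℕ → ℝ}
variable (hC : IsBDChain P X k l r)
include hC

lemma exp_h_const
    (hl : ∀ n : ℕ, 1 ≤ n → l n = (n : ℝ) / (2 * n + 1))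
    (hr : ∀ n : ℕ, 1 ≤ n → r n = ((n : ℝ) + 1) / (2 * n + 1)) :
    ∀ m : ℕ, ∫⁻ ω, ENNReal.ofReal (Hh (X m ω)) ∂P = ENNReal.ofReal (Hh k) := by
  have := hC.isProb
  intro m
  induction m with
  | zero =>
    rw [MeasureTheory.lintegral_congr_ae (hC.init.mono (fun ω h => by rw [h]))]
    simp
  | succ m ih =>
    set f : ℕ → ℝ≥0∞ := fun n => ENNReal.ofReal (Hh n) with hf
    have h1 : ∫⁻ ω, f (X (m+1) ω) ∂P = ∫⁻ ω in Set.univ, f (X (m+1) ω) ∂P :=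
      (MeasureTheory.setLIntegral_univ _).symm
    rw [h1, exp_step hC m Set.univ MeasurableSet.univ f]
    have h2 : ∀ n : ℕ, (if n = 0 then f 0 else
        ENNReal.ofReal (r n) * f (n+1) + ENNReal.ofReal (l n) * f (n-1))
          * P (Set.univ ∩ {ω | X m ω = n}) = f n * P (Set.univ ∩ {ω | X m ω = n}) := by
      intro n
      rcases Nat.eq_zero_or_pos n with hn | hn
      · subst hn; simp
      · rw [if_neg (by omega), hf]
        rw [Hh_harmonicE l r hC.l_pos hC.r_pos hl hr n hn]
    rw [tsum_congr h2, ← setLintegral_comp m MeasurableSet.univ hC.meas f,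
      MeasureTheory.setLIntegral_univ]
    exact ih

lemma absorb_forever : ∀ᵐ ω ∂P, ∀ j j', j ≤ j' → X j ω = 0 → X j' ω = 0 := by
  filter_upwards [hC.absorb] with ω hω
  intro j j' hjj' h0
  obtain ⟨d, rfl⟩ := Nat.exists_eq_add_of_le hjj'
  clear hjj'
  induction d with
  | zero => simpa using h0
  | succ d ih => exact hω (j + d) ih

lemma prob_pos_tendsto_zero (hnever : P {ω | ∀ m, 1 ≤ X m ω} = 0) :
    Filter.Tendsto (fun m => P {ω | 1 ≤ X m ω}) Filter.atTop (nhds 0) := by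
  have := hC.isProb
  set F : ℕ → Set Ω := fun m => {ω | ∀ j, j ≤ m → 1 ≤ X j ω} with hF
  have hFm : ∀ m, MeasurableSet (F m) := by
    intro m
    have : F m = ⋂ j, ⋂ (_ : j ≤ m), X j ⁻¹' {i | 1 ≤ i} := by
      ext ω; simp [hF]
    rw [this]
    exact MeasurableSet.iInter fun j => MeasurableSet.iInter fun _ =>
      (hC.meas j) (measurableSet_le measurable_const measurable_id)
  have hanti : Antitone F := by
    intro a b hab ω hω j hj
    exact hω j (le_trans hj hab)
  have hinter : ⋂ m, F m = {ω | ∀ m, 1 ≤ X m ω} := by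
    ext ω; simp only [Set.mem_iInter, Set.mem_setOf_eq, hF]
    exact ⟨fun h m => h m m le_rfl, fun h m j _ => h j⟩
  have hlim : Filter.Tendsto (fun m => P (F m)) Filter.atTop (nhds 0) := by
    have := MeasureTheory.tendsto_measure_iInter_atTop (μ := P)
      (fun m => (hFm m).nullMeasurableSet) hanti ⟨0, measure_ne_top P _⟩
    rw [hinter, hnever] at this
    exact this
  have hle : ∀ m, P {ω | 1 ≤ X m ω} ≤ P (F m) := by
    intro m
    apply MeasureTheory.measure_mono_ae
    filter_upwards [absorb_forever hC] with ω hω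
    intro h1 j hj
    by_contra h
    have h2 : X j ω = 0 := by omega
    have h3 := hω j m hj h2
    have h4 : 1 ≤ X m ω := h1
    omega
  exact tendsto_of_tendsto_of_tendsto_of_le_of_le tendsto_const_nhds hlim
    (fun m => zero_le) hle
end BD3

section BD4
variable {Ω : Type*} [MeasurableSpace Ω] {P : MeasureTheory.Measure Ω} {X : ℕ → Ω → ℕ} {k : ℕ} {l r : ℕ → ℝ}
variable (hC : IsBDChain P X k l r)
include hC

lemma key_bound
    (hl : ∀ n : ℕ, 1 ≤ n → l n = (n : ℝ) / (2 * n + 1))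
    (hr : ∀ n : ℕ, 1 ≤ n → r n = ((n : ℝ) + 1) / (2 * n + 1))
    (N m : ℕ) :
    ENNReal.ofReal (Hh k) ≤ ENNReal.ofReal (Hh N) * P {ω | 1 ≤ X m ω}
      + ENNReal.ofReal (1/((N:ℝ)+1)) * ∫⁻ ω, (X m ω : ℝ≥0∞) ∂P := by
  have hXmeas : Measurable fun ω => (X m ω : ℝ≥0∞) :=
    (measurable_from_top).comp (hC.meas m)
  set S : Set Ω := {ω | 1 ≤ X m ω} with hS
  have hSm : MeasurableSet S := (hC.meas m) (measurableSet_le measurable_const measurable_id)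
  have h0 : ∫⁻ ω, ENNReal.ofReal (Hh (X m ω)) ∂P
      = ∫⁻ ω in S, ENNReal.ofReal (Hh (X m ω)) ∂P
        + ∫⁻ ω in Sᶜ, ENNReal.ofReal (Hh (X m ω)) ∂P :=
    (MeasureTheory.lintegral_add_compl _ hSm).symm
  have hcompl : ∫⁻ ω in Sᶜ, ENNReal.ofReal (Hh (X m ω)) ∂P = 0 := by
    rw [show ∫⁻ ω in Sᶜ, ENNReal.ofReal (Hh (X m ω)) ∂P = ∫⁻ _ in Sᶜ, 0 ∂P from
      MeasureTheory.setLIntegral_congr_fun_ae hSm.compl (Filter.Eventually.of_forall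
        (fun ω hω => by
          have : X m ω = 0 := by
            simp only [hS, Set.mem_compl_iff, Set.mem_setOf_eq, not_le] at hω
            omega
          rw [this, Hh_zero]; simp))]
    simp
  have hmain : ∫⁻ ω in S, ENNReal.ofReal (Hh (X m ω)) ∂P
      ≤ ENNReal.ofReal (Hh N) * P S + ENNReal.ofReal (1/((N:ℝ)+1)) * ∫⁻ ω, (X m ω : ℝ≥0∞) ∂P := by
    have hpt : ∀ ω, ENNReal.ofReal (Hh (X m ω))
        ≤ ENNReal.ofReal (Hh N) + ENNReal.ofReal (1/((N:ℝ)+1)) * (X m ω : ℝ≥0∞) := by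
      intro ω
      have h1 : Hh (X m ω) ≤ Hh N + (X m ω : ℝ) * (1/((N:ℝ)+1)) := Hh_le_linear N (X m ω)
      calc ENNReal.ofReal (Hh (X m ω))
          ≤ ENNReal.ofReal (Hh N + (X m ω : ℝ) * (1/((N:ℝ)+1))) := ENNReal.ofReal_le_ofReal h1
        _ = ENNReal.ofReal (Hh N) + ENNReal.ofReal ((X m ω : ℝ) * (1/((N:ℝ)+1))) :=
            ENNReal.ofReal_add (Hh_nonneg N) (by positivity)
        _ = ENNReal.ofReal (Hh N) + ENNReal.ofReal (1/((N:ℝ)+1)) * (X m ω : ℝ≥0∞) := by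
            rw [mul_comm ((X m ω : ℝ)), ENNReal.ofReal_mul (by positivity),
              ENNReal.ofReal_natCast]
    calc ∫⁻ ω in S, ENNReal.ofReal (Hh (X m ω)) ∂P
        ≤ ∫⁻ ω in S, (ENNReal.ofReal (Hh N) + ENNReal.ofReal (1/((N:ℝ)+1)) * (X m ω : ℝ≥0∞)) ∂P :=
          MeasureTheory.setLIntegral_mono (by fun_prop) (fun ω _ => hpt ω)
      _ = ENNReal.ofReal (Hh N) * P S
            + ∫⁻ ω in S, ENNReal.ofReal (1/((N:ℝ)+1)) * (X m ω : ℝ≥0∞) ∂P := by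
          rw [MeasureTheory.lintegral_add_left measurable_const, MeasureTheory.setLIntegral_const]
      _ ≤ ENNReal.ofReal (Hh N) * P S
            + ENNReal.ofReal (1/((N:ℝ)+1)) * ∫⁻ ω, (X m ω : ℝ≥0∞) ∂P := by
          gcongr
          rw [MeasureTheory.lintegral_const_mul _ hXmeas]
          gcongr
          exact MeasureTheory.Measure.restrict_le_self
  calc ENNReal.ofReal (Hh k) = ∫⁻ ω, ENNReal.ofReal (Hh (X m ω)) ∂P :=
        (exp_h_const hC hl hr m).symm
    _ = ∫⁻ ω in S, ENNReal.ofReal (Hh (X m ω)) ∂P := by rw [h0, hcompl, add_zero]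
    _ ≤ _ := hmain

lemma part3
    (hl : ∀ n : ℕ, 1 ≤ n → l n = (n : ℝ) / (2 * n + 1))
    (hr : ∀ n : ℕ, 1 ≤ n → r n = ((n : ℝ) + 1) / (2 * n + 1))
    (hnever : P {ω | ∀ m, 1 ≤ X m ω} = 0) :
    Filter.Tendsto (fun m => ∫⁻ ω, (X m ω : ℝ≥0∞) ∂P) Filter.atTop (nhds ⊤) := by
  apply ENNReal.tendsto_nhds_top
  intro n
  set N : ℕ := 2*n + 1 with hN
  have hHN : (0:ℝ≥0∞) < ENNReal.ofReal (Hh N) := by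
    rw [ENNReal.ofReal_pos]
    have := Hh_one_le (n := N) (by omega)
    linarith
  have hsmall : ∀ᶠ m in Filter.atTop,
      ENNReal.ofReal (Hh N) * P {ω | 1 ≤ X m ω} < 1/2 := by
    have h2 : Filter.Tendsto (fun m => ENNReal.ofReal (Hh N) * P {ω | 1 ≤ X m ω})
        Filter.atTop (nhds 0) := by
      have := ENNReal.Tendsto.const_mul (prob_pos_tendsto_zero hC hnever)
        (Or.inr (@ENNReal.ofReal_ne_top (Hh N)))
      simpa using this
    exact h2.eventually_lt_const (by norm_num)
  filter_upwards [hsmall] with m hm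
  set E : ℝ≥0∞ := ∫⁻ ω, (X m ω : ℝ≥0∞) ∂P with hE
  have hkey := key_bound hC hl hr N m
  have hk1 : (1:ℝ≥0∞) ≤ ENNReal.ofReal (Hh k) := by
    rw [show (1:ℝ≥0∞) = ENNReal.ofReal 1 by simp]
    exact ENNReal.ofReal_le_ofReal (Hh_one_le hC.one_le_k)
  have hc : (1/2 : ℝ≥0∞) ≤ ENNReal.ofReal (1/((N:ℝ)+1)) * E := by
    by_contra hcon
    push_neg at hcon
    have : ENNReal.ofReal (Hh k) < 1/2 + 1/2 :=
      lt_of_le_of_lt hkey (ENNReal.add_lt_add hm hcon)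
    rw [ENNReal.add_halves] at this
    exact absurd hk1 (not_le.2 this)
  have hconv : ENNReal.ofReal (1/((N:ℝ)+1)) = ((N:ℝ≥0∞)+1)⁻¹ := by
    rw [one_div, ENNReal.ofReal_inv_of_pos (by positivity)]
    congr 1
    rw [ENNReal.ofReal_add (by positivity) (by norm_num), ENNReal.ofReal_natCast,
      ENNReal.ofReal_one]
  rw [hconv] at hc
  have hNne : ((N:ℝ≥0∞)+1) ≠ 0 := by simp
  have hNnetop : ((N:ℝ≥0∞)+1) ≠ ⊤ := by simp [ENNReal.add_ne_top]
  have hE2 : ((N:ℝ≥0∞)+1) * (1/2) ≤ E := by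
    calc ((N:ℝ≥0∞)+1) * (1/2) ≤ ((N:ℝ≥0∞)+1) * (((N:ℝ≥0∞)+1)⁻¹ * E) := by gcongr
      _ = E := by rw [← mul_assoc, ENNReal.mul_inv_cancel hNne hNnetop, one_mul]
  calc (n : ℝ≥0∞) < (n : ℝ≥0∞) + 1 := by
        apply ENNReal.lt_add_right (by simp) one_ne_zero
    _ ≤ ((N:ℝ≥0∞)+1) * (1/2) := by
        rw [hN]
        push_cast
        rw [show ((2:ℝ≥0∞) * n + 1 + 1) = 2 * ((n:ℝ≥0∞) + 1) by ring]
        rw [mul_comm, ← mul_assoc]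
        rw [show ((1:ℝ≥0∞)/2) * 2 = 1 by
          rw [one_div, ENNReal.inv_mul_cancel (by norm_num) (by norm_num)]]
        rw [one_mul]
    _ ≤ E := hE2
end BD4

section BD5
variable {Ω : Type*} [MeasurableSpace Ω] {P : MeasureTheory.Measure Ω} {X : ℕ → Ω → ℕ} {k : ℕ} {l r : ℕ → ℝ}

lemma meas_partition (j : ℕ) {S : Set Ω} (hS : MeasurableSet S) (hX : ∀ i, Measurable (X i)) :
    P S = ∑' n : ℕ, P (S ∩ {ω | X j ω = n}) := by
  have hU : S = ⋃ n : ℕ, S ∩ {ω | X j ω = n} := by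
    ext ω; simp [Set.mem_iUnion]
  have hm : ∀ n : ℕ, MeasurableSet (S ∩ {ω | X j ω = n}) :=
    fun n => hS.inter ((hX j) (measurableSet_singleton n))
  have hd : Pairwise (Function.onFun Disjoint (fun n : ℕ => S ∩ {ω | X j ω = n})) := by
    intro a b hab
    apply Set.disjoint_left.2
    rintro ω ⟨_, h1⟩ ⟨_, h2⟩
    exact hab (h1 ▸ h2 ▸ rfl)
  conv_lhs => rw [hU]
  exact MeasureTheory.measure_iUnion hd hm

variable (hC : IsBDChain P X k l r)
include hC

/-- A.e., from a positive state the chain moves by `±1`. -/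
lemma ae_step : ∀ᵐ ω ∂P, ∀ m, 1 ≤ X m ω →
    X (m+1) ω = X m ω + 1 ∨ X (m+1) ω = X m ω - 1 := by
  rw [MeasureTheory.ae_iff]
  have hnull : P (⋃ m : ℕ, ⋃ n : ℕ,
      {ω | 1 ≤ n ∧ X m ω = n ∧ X (m+1) ω ≠ n + 1 ∧ X (m+1) ω ≠ n - 1}) = 0 := by
    apply MeasureTheory.measure_iUnion_null
    intro m
    apply MeasureTheory.measure_iUnion_null
    intro n
    rcases Nat.eq_zero_or_pos n with hn | hn
    · have : {ω | 1 ≤ n ∧ X m ω = n ∧ X (m+1) ω ≠ n + 1 ∧ X (m+1) ω ≠ n - 1} = ∅ := by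
        ext ω; simp only [Set.mem_setOf_eq, Set.mem_empty_iff_false, iff_false]
        rintro ⟨h1, _⟩; omega
      simp [this]
    · refine MeasureTheory.measure_mono_null ?_ (step_rest hC m n hn Set.univ MeasurableSet.univ)
      rintro ω ⟨_, h2, h3, h4⟩; exact ⟨trivial, h2, h3, h4⟩
  refine MeasureTheory.measure_mono_null ?_ hnull
  intro ω hω
  simp only [Set.mem_setOf_eq, not_forall] at hω
  obtain ⟨m, hm⟩ := hω
  simp only [Set.mem_iUnion, Set.mem_setOf_eq]
  refine ⟨m, X m ω, ?_⟩
  push_neg at hm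
  obtain ⟨h1, h2, h3⟩ := hm
  exact ⟨h1, rfl, h2, h3⟩

/-- Iterated up-moves. -/
lemma uprun (m n : ℕ) (hn : 1 ≤ n) (A : Set Ω) (hA : MeasurableSet[natFilt X m] A) :
    ∀ i : ℕ, P (A ∩ {ω | X m ω = n} ∩ {ω | ∀ j, j ≤ i → X (m+j) ω = n + j})
      = (∏ j ∈ Finset.range i, ENNReal.ofReal (r (n+j))) * P (A ∩ {ω | X m ω = n}) := by
  intro i
  induction i with
  | zero =>
    have : A ∩ {ω | X m ω = n} ∩ {ω | ∀ j, j ≤ 0 → X (m+j) ω = n + j}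
        = A ∩ {ω | X m ω = n} := by
      ext ω
      simp only [Set.mem_inter_iff, Set.mem_setOf_eq]
      constructor
      · rintro ⟨h, _⟩; exact h
      · intro h
        refine ⟨h, fun j hj => ?_⟩
        interval_cases j
        simpa using h.2
    rw [this]; simp
  | succ i ih =>
    set B : Set Ω := A ∩ {ω | X m ω = n} ∩ {ω | ∀ j, j ≤ i → X (m+j) ω = n + j} with hB
    have hBfilt : MeasurableSet[natFilt X (m+i)] B := by
      apply MeasurableSet.inter
      apply MeasurableSet.inter
      · exact natFilt_mono (by omega) A hA
      · exact natFilt_meas_eq (by omega) n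
      · have : {ω | ∀ j, j ≤ i → X (m+j) ω = n + j}
            = ⋂ j, ⋂ (_ : j ≤ i), X (m+j) ⁻¹' {n+j} := by
          ext ω; simp
        rw [this]
        exact MeasurableSet.iInter fun j => MeasurableSet.iInter fun hj =>
          natFilt_meas (by omega) _
    have hstep := hC.step_up (m+i) (n+i) (by omega) B hBfilt
    have hBX : B ∩ {ω | X (m+i) ω = n+i} = B := by
      apply Set.inter_eq_self_of_subset_left
      rintro ω ⟨⟨_, _⟩, h3⟩
      exact h3 i le_rfl
    have hBsucc : B ∩ {ω | X (m+i) ω = n+i ∧ X (m+i+1) ω = n+i+1}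
        = A ∩ {ω | X m ω = n} ∩ {ω | ∀ j, j ≤ i+1 → X (m+j) ω = n + j} := by
      ext ω
      simp only [hB, Set.mem_inter_iff, Set.mem_setOf_eq]
      constructor
      · rintro ⟨⟨⟨h1, h2⟩, h3⟩, _, h5⟩
        refine ⟨⟨h1, h2⟩, fun j hj => ?_⟩
        rcases Nat.lt_or_ge j (i+1) with h | h
        · exact h3 j (by omega)
        · have hji : j = i + 1 := by omega
          subst hji
          exact h5
      · rintro ⟨⟨h1, h2⟩, h3⟩
        exact ⟨⟨⟨h1, h2⟩, fun j hj => h3 j (by omega)⟩, h3 i (by omega), h3 (i+1) le_rfl⟩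
    rw [← hBsucc, hstep, hBX, Finset.prod_range_succ, hB, ih]
    ring
end BD5

/-- The corridor event: up to time `m`, the chain has stayed in `[1, N)`. -/
def Cset {Ω : Type*} (X : ℕ → Ω → ℕ) (N m : ℕ) : Set Ω :=
  {ω | ∀ j, j ≤ m → 1 ≤ X j ω ∧ X j ω < N}

section BD6
variable {Ω : Type*} [MeasurableSpace Ω] {P : MeasureTheory.Measure Ω} {X : ℕ → Ω → ℕ} {k : ℕ} {l r : ℕ → ℝ}

lemma Cset_filt (N m : ℕ) : MeasurableSet[natFilt X m] (Cset X N m) := by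
  have : Cset X N m = ⋂ j, ⋂ (_ : j ≤ m), X j ⁻¹' {i | 1 ≤ i ∧ i < N} := by
    ext ω; simp [Cset]
  rw [this]
  exact MeasurableSet.iInter fun j => MeasurableSet.iInter fun hj => natFilt_meas hj _

lemma Cset_amb (hX : ∀ i, Measurable (X i)) (N m : ℕ) : MeasurableSet (Cset X N m) :=
  natFilt_le hX m _ (Cset_filt N m)

lemma Cset_anti (N : ℕ) : Antitone (Cset X N) := by
  intro a b hab ω hω j hj
  exact hω j (le_trans hj hab)

lemma Cset_succ (N m : ℕ) :
    Cset X N (m+1) = Cset X N m ∩ {ω | 1 ≤ X (m+1) ω ∧ X (m+1) ω < N} := by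
  ext ω
  simp only [Cset, Set.mem_setOf_eq, Set.mem_inter_iff]
  constructor
  · intro h
    exact ⟨fun j hj => h j (by omega), h (m+1) le_rfl⟩
  · rintro ⟨h1, h2⟩ j hj
    rcases Nat.lt_or_ge j (m+1) with h | h
    · exact h1 j (by omega)
    · have : j = m+1 := by omega
      subst this; exact h2

lemma Cset_inter_empty (N m n : ℕ) (h : ¬(1 ≤ n ∧ n < N)) :
    Cset X N m ∩ {ω | X m ω = n} = ∅ := by
  ext ω
  simp only [Set.mem_inter_iff, Set.mem_empty_iff_false, iff_false, Set.mem_setOf_eq]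
  rintro ⟨h1, h2⟩
  exact h (h2 ▸ h1 m le_rfl)

variable (hC : IsBDChain P X k l r)
include hC

lemma r_le_one (n : ℕ) (hn : 1 ≤ n) : r n ≤ 1 := by
  have := hC.lr_one n hn
  have := hC.l_pos n hn
  linarith

lemma escape (N : ℕ) (m : ℕ) :
    P (Cset X N (m+N)) ≤ (1 - ∏ i ∈ Finset.Icc 1 (2*N), ENNReal.ofReal (r i)) * P (Cset X N m) := by
  have := hC.isProb
  set c : ℝ≥0∞ := ∏ i ∈ Finset.Icc 1 (2*N), ENNReal.ofReal (r i) with hc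
  have hkey : ∀ n : ℕ, P (Cset X N (m+N) ∩ {ω | X m ω = n})
      ≤ (1 - c) * P (Cset X N m ∩ {ω | X m ω = n}) := by
    intro n
    by_cases hn : 1 ≤ n ∧ n < N
    · set S : Set Ω := Cset X N m ∩ {ω | X m ω = n} with hS
      set U : Set Ω := Cset X N m ∩ {ω | X m ω = n} ∩ {ω | ∀ j, j ≤ N → X (m+j) ω = n + j}
        with hU
      have hUmeas : MeasurableSet U := by
        apply MeasurableSet.inter
        · exact (Cset_amb hC.meas N m).inter ((hC.meas m) (measurableSet_singleton n))
        · have : {ω | ∀ j, j ≤ N → X (m+j) ω = n + j}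
              = ⋂ j, ⋂ (_ : j ≤ N), X (m+j) ⁻¹' {n+j} := by
            ext ω; simp
          rw [this]
          exact MeasurableSet.iInter fun j => MeasurableSet.iInter fun _ =>
            (hC.meas (m+j)) (measurableSet_singleton _)
      have hPU : c * P S ≤ P U := by
        rw [hU, uprun hC m n hn.1 (Cset X N m) (Cset_filt N m) N]
        apply mul_le_mul_left
        calc c ≤ ∏ i ∈ Finset.Ico n (n+N), ENNReal.ofReal (r i) := by
              have hsub : Finset.Ico n (n+N) ⊆ Finset.Icc 1 (2*N) := by
                intro i hi
                simp only [Finset.mem_Ico, Finset.mem_Icc] at hi ⊢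
                omega
              rw [hc, ← Finset.prod_sdiff hsub]
              have h1 : ∏ i ∈ Finset.Icc 1 (2*N) \ Finset.Ico n (n+N),
                  ENNReal.ofReal (r i) ≤ 1 := by
                apply Finset.prod_le_one (fun i _ => zero_le)
                intro i hi
                simp only [Finset.mem_sdiff, Finset.mem_Icc] at hi
                exact ENNReal.ofReal_le_one.2 (r_le_one hC i hi.1.1)
              calc (∏ i ∈ Finset.Icc 1 (2*N) \ Finset.Ico n (n+N), ENNReal.ofReal (r i))
                    * ∏ i ∈ Finset.Ico n (n+N), ENNReal.ofReal (r i)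
                  ≤ 1 * ∏ i ∈ Finset.Ico n (n+N), ENNReal.ofReal (r i) := by gcongr
                _ = _ := one_mul _
          _ = ∏ j ∈ Finset.range N, ENNReal.ofReal (r (n+j)) := by
              rw [Finset.prod_Ico_eq_prod_range]
              simp
      have hUS : U ⊆ S := fun ω hω => hω.1
      have hdisj : Cset X N (m+N) ∩ {ω | X m ω = n} ⊆ S \ U := by
        rintro ω ⟨h1, h2⟩
        refine ⟨⟨Cset_anti N (by omega) h1, h2⟩, ?_⟩
        rintro ⟨_, h4⟩
        have h5 := h4 N le_rfl
        have h6 := (h1 (m+N) le_rfl).2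
        omega
      calc P (Cset X N (m+N) ∩ {ω | X m ω = n}) ≤ P (S \ U) := measure_mono hdisj
        _ = P S - P U := MeasureTheory.measure_diff hUS hUmeas.nullMeasurableSet
            (MeasureTheory.measure_ne_top P U)
        _ ≤ P S - c * P S := tsub_le_tsub_left hPU _
        _ = (1 - c) * P S := by
            rw [ENNReal.sub_mul (fun _ _ => MeasureTheory.measure_ne_top P S), one_mul]
    · have h1 : Cset X N m ∩ {ω | X m ω = n} = ∅ := Cset_inter_empty N m n hn
      have h2 : Cset X N (m+N) ∩ {ω | X m ω = n} = ∅ := by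
        apply Set.eq_empty_of_subset_empty
        rw [← h1]
        exact Set.inter_subset_inter_left _ (Cset_anti N (by omega))
      simp [h1, h2]
  calc P (Cset X N (m+N))
      = ∑' n : ℕ, P (Cset X N (m+N) ∩ {ω | X m ω = n}) :=
        meas_partition m (Cset_amb hC.meas N (m+N)) hC.meas
    _ ≤ ∑' n : ℕ, (1 - c) * P (Cset X N m ∩ {ω | X m ω = n}) :=
        ENNReal.tsum_le_tsum hkey
    _ = (1 - c) * ∑' n : ℕ, P (Cset X N m ∩ {ω | X m ω = n}) := ENNReal.tsum_mul_left
    _ = (1 - c) * P (Cset X N m) := by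
        rw [← meas_partition m (Cset_amb hC.meas N m) hC.meas]

lemma inter_null (N : ℕ) (hN : 1 ≤ N) : P (⋂ m, Cset X N m) = 0 := by
  have := hC.isProb
  set c : ℝ≥0∞ := ∏ i ∈ Finset.Icc 1 (2*N), ENNReal.ofReal (r i) with hc
  have hc0 : c ≠ 0 := by
    rw [hc]
    apply Finset.prod_ne_zero_iff.2
    intro i hi
    simp only [Finset.mem_Icc] at hi
    exact (ENNReal.ofReal_pos.2 (hC.r_pos i hi.1)).ne'
  have hdecay : ∀ j : ℕ, P (Cset X N (j*N)) ≤ (1 - c)^j := by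
    intro j
    induction j with
    | zero => simpa using MeasureTheory.prob_le_one
    | succ j ih =>
      have : (j+1)*N = j*N + N := by ring
      rw [this]
      calc P (Cset X N (j*N + N)) ≤ (1 - c) * P (Cset X N (j*N)) := escape hC N (j*N)
        _ ≤ (1 - c) * (1-c)^j := by gcongr
        _ = (1-c)^(j+1) := by ring
  have hlt : (1 - c) < 1 := ENNReal.sub_lt_self ENNReal.one_ne_top one_ne_zero hc0
  have htend : Filter.Tendsto (fun j : ℕ => (1-c)^j) Filter.atTop (nhds 0) :=
    ENNReal.tendsto_pow_atTop_nhds_zero_of_lt_one hlt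
  have hle : ∀ j : ℕ, P (⋂ m, Cset X N m) ≤ (1-c)^j := by
    intro j
    exact le_trans (MeasureTheory.measure_mono (Set.iInter_subset _ (j*N))) (hdecay j)
  have := ge_of_tendsto htend (Filter.Eventually.of_forall hle)
  simpa using this
end BD6

section BD7
variable {Ω : Type*} [MeasurableSpace Ω] {P : MeasureTheory.Measure Ω} {X : ℕ → Ω → ℕ} {k : ℕ} {l r : ℕ → ℝ}
variable (hC : IsBDChain P X k l r)
include hC

lemma qrec
    (hl : ∀ n : ℕ, 1 ≤ n → l n = (n : ℝ) / (2 * n + 1))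
    (hr : ∀ n : ℕ, 1 ≤ n → r n = ((n : ℝ) + 1) / (2 * n + 1))
    (N m : ℕ) :
    ∫⁻ ω in Cset X N m, ENNReal.ofReal (Hh (X m ω)) ∂P
      = (∫⁻ ω in Cset X N (m+1), ENNReal.ofReal (Hh (X (m+1) ω)) ∂P)
        + ENNReal.ofReal (Hh N) * P (Cset X N m ∩ {ω | X (m+1) ω = N}) := by
  set f : ℕ → ℝ≥0∞ := fun n => ENNReal.ofReal (Hh n) with hf
  set C : Set Ω := Cset X N m with hCm
  have hCamb : MeasurableSet C := Cset_amb hC.meas N m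
  -- (i) the stopped one-step expectation is conserved
  have hi : ∫⁻ ω in C, f (X (m+1) ω) ∂P = ∫⁻ ω in C, f (X m ω) ∂P := by
    rw [exp_step hC m C (Cset_filt N m) f, setLintegral_comp m hCamb hC.meas f]
    apply tsum_congr
    intro n
    rcases Nat.eq_zero_or_pos n with hn | hn
    · subst hn; simp
    · rw [if_neg (by omega), hf, Hh_harmonicE l r hC.l_pos hC.r_pos hl hr n hn]
  -- (ii) split the integral over the next-step corridor and its complement
  have hii : ∫⁻ ω in C, f (X (m+1) ω) ∂P
      = (∫⁻ ω in Cset X N (m+1), f (X (m+1) ω) ∂P)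
        + ∫⁻ ω in C \ Cset X N (m+1), f (X (m+1) ω) ∂P := by
    have hsub : Cset X N (m+1) ⊆ C := Cset_anti N (by omega)
    have hunion : C = Cset X N (m+1) ∪ (C \ Cset X N (m+1)) := by
      rw [Set.union_diff_cancel hsub]
    conv_lhs => rw [hunion]
    exact MeasureTheory.lintegral_union (hCamb.diff (Cset_amb hC.meas N (m+1)))
      Set.disjoint_sdiff_right
  -- (iii) on the stopped part, the chain is at `N` (or at `0` where `f` vanishes)
  have hiii : ∫⁻ ω in C \ Cset X N (m+1), f (X (m+1) ω) ∂P
      = ENNReal.ofReal (Hh N) * P (C ∩ {ω | X (m+1) ω = N}) := by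
    set D : Set Ω := C \ Cset X N (m+1) with hD
    have hDamb : MeasurableSet D := hCamb.diff (Cset_amb hC.meas N (m+1))
    rw [setLintegral_comp (m+1) hDamb hC.meas f]
    have hDN : D ∩ {ω | X (m+1) ω = N} = C ∩ {ω | X (m+1) ω = N} := by
      ext ω
      simp only [hD, Set.mem_inter_iff, Set.mem_diff, Set.mem_setOf_eq]
      constructor
      · rintro ⟨⟨h1, _⟩, h3⟩; exact ⟨h1, h3⟩
      · rintro ⟨h1, h3⟩
        refine ⟨⟨h1, fun hmem => ?_⟩, h3⟩
        have := (hmem (m+1) le_rfl).2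
        omega
    have hzero : ∀ n' : ℕ, n' ≠ N → f n' * P (D ∩ {ω | X (m+1) ω = n'}) = 0 := by
      intro n' hn'
      rcases Nat.eq_zero_or_pos n' with h0 | h0
      · subst h0; simp [hf, Hh_zero]
      rcases Nat.lt_or_ge n' N with hlt | hge
      · -- the chain would still be in the corridor
        have : D ∩ {ω | X (m+1) ω = n'} = ∅ := by
          ext ω
          simp only [hD, Set.mem_inter_iff, Set.mem_diff, Set.mem_empty_iff_false, iff_false,
            Set.mem_setOf_eq]
          rintro ⟨⟨h1, h2⟩, h3⟩
          apply h2
          rw [Cset_succ]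
          refine ⟨h1, ?_⟩
          show 1 ≤ X (m+1) ω ∧ X (m+1) ω < N
          omega
        simp [this]
      · -- a jump of size `> 1`, which is null
        have hgt : N < n' := by omega
        have hnull : P (D ∩ {ω | X (m+1) ω = n'}) = 0 := by
          rw [meas_partition (P := P) m (S := D ∩ {ω | X (m+1) ω = n'})
            (hDamb.inter ((hC.meas (m+1)) (measurableSet_singleton n'))) hC.meas]
          apply ENNReal.tsum_eq_zero.2
          intro n
          by_cases hn : 1 ≤ n ∧ n < N
          · refine MeasureTheory.measure_mono_null ?_
              (step_rest hC m n hn.1 C (Cset_filt N m))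
            rintro ω ⟨⟨⟨hω1, _⟩, hω2⟩, hω3⟩
            simp only [Set.mem_setOf_eq] at hω2 hω3
            exact ⟨hω1, hω3, by omega, by omega⟩
          · have hempty : C ∩ {ω | X m ω = n} = ∅ := Cset_inter_empty N m n hn
            have hsub2 : D ∩ {ω | X (m+1) ω = n'} ∩ {ω | X m ω = n} ⊆ (∅ : Set Ω) := by
              intro ω hω
              rw [← hempty]
              exact ⟨hω.1.1.1, hω.2⟩
            exact MeasureTheory.measure_mono_null hsub2 (by simp)
        rw [hnull, mul_zero]
    rw [tsum_eq_single N hzero, hDN, hf]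
  rw [← hi, hii, hiii]
end BD7

section BD8
variable {Ω : Type*} [MeasurableSpace Ω] {P : MeasureTheory.Measure Ω} {X : ℕ → Ω → ℕ} {k : ℕ} {l r : ℕ → ℝ}
variable (hC : IsBDChain P X k l r)
include hC

lemma init_prob : P {ω | X 0 ω = k} = 1 := by
  have := hC.isProb
  have h0 : P {ω | X 0 ω = k}ᶜ = 0 := by
    have := MeasureTheory.ae_iff.1 hC.init
    simpa [Set.compl_setOf] using this
  have h1 : (1:ℝ≥0∞) = P Set.univ := (MeasureTheory.measure_univ).symm
  have h2 : P Set.univ ≤ P {ω | X 0 ω = k} + P {ω | X 0 ω = k}ᶜ := by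
    rw [← Set.union_compl_self {ω | X 0 ω = k}]
    exact MeasureTheory.measure_union_le _ _
  have h3 : P {ω | X 0 ω = k} ≤ 1 := MeasureTheory.prob_le_one
  rw [h0, add_zero] at h2
  rw [← h1] at h2
  exact le_antisymm h3 h2

lemma q_zero (N : ℕ) (hkN : k < N) :
    ∫⁻ ω in Cset X N 0, ENNReal.ofReal (Hh (X 0 ω)) ∂P = ENNReal.ofReal (Hh k) := by
  have := hC.isProb
  have hCamb : MeasurableSet (Cset X N 0) := Cset_amb hC.meas N 0
  have hPC : P (Cset X N 0) = 1 := by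
    have hsub : {ω | X 0 ω = k} ⊆ Cset X N 0 := by
      intro ω hω j hj
      interval_cases j
      simp only [Set.mem_setOf_eq] at hω
      rw [hω]
      exact ⟨hC.one_le_k, hkN⟩
    exact le_antisymm MeasureTheory.prob_le_one
      (le_trans (le_of_eq (init_prob hC).symm) (MeasureTheory.measure_mono hsub))
  rw [show ∫⁻ ω in Cset X N 0, ENNReal.ofReal (Hh (X 0 ω)) ∂P
      = ∫⁻ _ in Cset X N 0, ENNReal.ofReal (Hh k) ∂P from
    MeasureTheory.setLIntegral_congr_fun_ae hCamb (hC.init.mono (fun ω hω _ => by rw [hω]))]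
  rw [MeasureTheory.setLIntegral_const, hPC, mul_one]

lemma telescope
    (hl : ∀ n : ℕ, 1 ≤ n → l n = (n : ℝ) / (2 * n + 1))
    (hr : ∀ n : ℕ, 1 ≤ n → r n = ((n : ℝ) + 1) / (2 * n + 1))
    (N : ℕ) (hkN : k < N) (m : ℕ) :
    ENNReal.ofReal (Hh N) * ∑ j ∈ Finset.range m, P (Cset X N j ∩ {ω | X (j+1) ω = N})
      ≤ ENNReal.ofReal (Hh k) := by
  have key : ∀ m : ℕ, ENNReal.ofReal (Hh k)
      = (∫⁻ ω in Cset X N m, ENNReal.ofReal (Hh (X m ω)) ∂P)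
        + ENNReal.ofReal (Hh N)
            * ∑ j ∈ Finset.range m, P (Cset X N j ∩ {ω | X (j+1) ω = N}) := by
    intro m
    induction m with
    | zero => simp [q_zero hC N hkN]
    | succ m ih =>
      rw [ih, qrec hC hl hr N m, Finset.sum_range_succ, mul_add]
      ring
  rw [key m]
  exact le_add_self

lemma never_bound
    (hl : ∀ n : ℕ, 1 ≤ n → l n = (n : ℝ) / (2 * n + 1))
    (hr : ∀ n : ℕ, 1 ≤ n → r n = ((n : ℝ) + 1) / (2 * n + 1))
    (N : ℕ) (hkN : k < N) :
    P {ω | ∀ m, 1 ≤ X m ω} ≤ ENNReal.ofReal (Hh k) / ENNReal.ofReal (Hh N) := by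
  have hN1 : 1 ≤ N := by omega
  have hHN0 : ENNReal.ofReal (Hh N) ≠ 0 :=
    (ENNReal.ofReal_pos.2 (by linarith [Hh_one_le hN1])).ne'
  have hHNtop : ENNReal.ofReal (Hh N) ≠ ⊤ := ENNReal.ofReal_ne_top
  have htsum : ∑' j : ℕ, P (Cset X N j ∩ {ω | X (j+1) ω = N})
      ≤ ENNReal.ofReal (Hh k) / ENNReal.ofReal (Hh N) := by
    apply ENNReal.tsum_le_of_sum_range_le
    intro m
    rw [ENNReal.le_div_iff_mul_le (Or.inl hHN0) (Or.inl hHNtop), mul_comm]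
    exact telescope hC hl hr N hkN m
  have hae : ∀ᵐ ω ∂P, ω ∈ {ω | ∀ m, 1 ≤ X m ω} →
      ω ∈ (⋂ m, Cset X N m) ∪ ⋃ j, (Cset X N j ∩ {ω | X (j+1) ω = N}) := by
    filter_upwards [hC.init, ae_step hC] with ω h0 hstep
    intro hGmem
    have hG : ∀ m, 1 ≤ X m ω := hGmem
    by_cases hall : ∀ m, ω ∈ Cset X N m
    · exact Or.inl (Set.mem_iInter.2 hall)
    · push_neg at hall
      obtain ⟨m, hm⟩ := hall
      have hex : ∃ j, N ≤ X j ω := by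
        by_contra hcon
        push_neg at hcon
        exact hm (fun j _ => ⟨hG j, hcon j⟩)
      right
      set j0 := Nat.find hex with hj0
      have hfind : N ≤ X j0 ω := Nat.find_spec hex
      have hmin : ∀ i, i < j0 → X i ω < N := by
        intro i hi
        have := Nat.find_min hex hi
        omega
      have hj0pos : 1 ≤ j0 := by
        rcases Nat.eq_zero_or_pos j0 with h | h
        · exfalso
          rw [h] at hfind
          rw [h0] at hfind
          omega
        · exact h
      refine Set.mem_iUnion.2 ⟨j0 - 1, ?_, ?_⟩
      · intro i hi
        exact ⟨hG i, hmin i (by omega)⟩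
      · show X (j0 - 1 + 1) ω = N
        have hj1 : j0 - 1 + 1 = j0 := by omega
        rw [hj1]
        have hstep' := hstep (j0 - 1) (hG (j0-1))
        have hless := hmin (j0-1) (by omega)
        rw [hj1] at hstep'
        omega
  calc P {ω | ∀ m, 1 ≤ X m ω}
      ≤ P ((⋂ m, Cset X N m) ∪ ⋃ j, (Cset X N j ∩ {ω | X (j+1) ω = N})) :=
        MeasureTheory.measure_mono_ae hae
    _ ≤ P (⋂ m, Cset X N m) + P (⋃ j, (Cset X N j ∩ {ω | X (j+1) ω = N})) :=
        MeasureTheory.measure_union_le _ _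
    _ ≤ 0 + ∑' j : ℕ, P (Cset X N j ∩ {ω | X (j+1) ω = N}) :=
        add_le_add (le_of_eq (inter_null hC N hN1)) (MeasureTheory.measure_iUnion_le _)
    _ ≤ _ := by rw [zero_add]; exact htsum

lemma hnever
    (hl : ∀ n : ℕ, 1 ≤ n → l n = (n : ℝ) / (2 * n + 1))
    (hr : ∀ n : ℕ, 1 ≤ n → r n = ((n : ℝ) + 1) / (2 * n + 1)) :
    P {ω | ∀ m, 1 ≤ X m ω} = 0 := by
  refine le_antisymm ?_ zero_le
  have htend : Filter.Tendsto (fun N : ℕ => ENNReal.ofReal (Hh k / Hh N))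
      Filter.atTop (nhds 0) := by
    rw [show (0:ℝ≥0∞) = ENNReal.ofReal 0 by simp]
    exact (ENNReal.continuous_ofReal.tendsto 0).comp
      (Filter.Tendsto.const_div_atTop Hh_tendsto (Hh k))
  apply ge_of_tendsto htend
  filter_upwards [Filter.eventually_ge_atTop (k+1)] with N hN
  have hkN : k < N := by omega
  have hHNpos : 0 < Hh N := by linarith [Hh_one_le (show 1 ≤ N by omega)]
  calc P {ω | ∀ m, 1 ≤ X m ω}
      ≤ ENNReal.ofReal (Hh k) / ENNReal.ofReal (Hh N) := never_bound hC hl hr N hkN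
    _ = ENNReal.ofReal (Hh k / Hh N) := (ENNReal.ofReal_div_of_pos hHNpos).symm
end BD8


/-- For the chain with `l_n = n/(2n+1)` and `r_n = (n+1)/(2n+1)`
started at `k ≥ 1`: `t_n = 1/(n+1)` for all `n`, the chain hits `0` with
probability `1`, and `E[X_m] → +∞` as `m → ∞`. -/
theorem stmt17 {Ω : Type*} [MeasurableSpace Ω] (P : Measure Ω) (X : ℕ → Ω → ℕ)
    (k : ℕ) (l r : ℕ → ℝ) (hC : IsBDChain P X k l r)
    (hl : ∀ n : ℕ, 1 ≤ n → l n = (n : ℝ) / (2 * n + 1))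
    (hr : ∀ n : ℕ, 1 ≤ n → r n = ((n : ℝ) + 1) / (2 * n + 1)) :
    (∀ n : ℕ, tp l r n = 1 / ((n : ℝ) + 1)) ∧
    P {ω | ∃ m : ℕ, X m ω = 0} = 1 ∧
    Tendsto (fun m => ∫⁻ ω, (X m ω : ℝ≥0∞) ∂P) atTop (nhds ⊤) := by
  have := hC.isProb
  have hnev : P {ω | ∀ m, 1 ≤ X m ω} = 0 := hnever hC hl hr
  refine ⟨?_, ?_, ?_⟩
  · -- part 1
    intro n
    rw [tp]
    induction n with
    | zero => simp
    | succ n ih =>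
      rw [Finset.prod_Icc_succ_top (Nat.le_add_left 1 n),
        Finset.prod_Icc_succ_top (Nat.le_add_left 1 n)]
      rw [hl _ (Nat.le_add_left 1 n), hr _ (Nat.le_add_left 1 n)]
      have h4 : (∏ i ∈ Finset.Icc 1 n, r i) ≠ 0 := by
        apply Finset.prod_ne_zero_iff.2
        intro i hi
        have := Finset.mem_Icc.1 hi
        rw [hr i this.1]
        positivity
      have h5 : (0:ℝ) < 2 * ((n:ℝ)+1) + 1 := by positivity
      push_cast
      rw [div_eq_div_iff (by positivity) (by positivity)] at ih ⊢
      linear_combination (((n:ℝ)+2)/(2*(n:ℝ)+3)) * ih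
  · -- part 2
    set S : Set Ω := {ω | ∃ m : ℕ, X m ω = 0} with hS
    have hSmeas : MeasurableSet S := by
      have : S = ⋃ m : ℕ, X m ⁻¹' {0} := by
        ext ω; simp [hS]
      rw [this]
      exact MeasurableSet.iUnion fun m => (hC.meas m) (measurableSet_singleton 0)
    have hcompl : P Sᶜ = 0 := by
      have : Sᶜ = {ω | ∀ m, 1 ≤ X m ω} := by
        ext ω
        simp only [hS, Set.mem_compl_iff, Set.mem_setOf_eq, not_exists]
        constructor
        · intro h m; have := h m; omega
        · intro h m; have := h m; omega
      rw [this, hnev]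
    have h2 : P Set.univ ≤ P S + P Sᶜ := by
      rw [← Set.union_compl_self S]
      exact MeasureTheory.measure_union_le _ _
    rw [hcompl, add_zero, MeasureTheory.measure_univ] at h2
    exact le_antisymm MeasureTheory.prob_le_one h2
  · -- part 3
    exact part3 hC hl hr hnev
end
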